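/- arXiv:1603.06265 — 8 statements merged into one kernel-verified Lean document; each statement's English description precedes it below -/
import Mathlib

section
/- Regret bound for multiplicative weights with nonuniform initial weights and per-expert learning rates: for every x* ∈ X and every T, Σ_{t=1}^{T} ℓ_t(A_t) ≤ Σ_{t=1}^{T} ℓ_t(x*) + ε(x*)·Σ_{t=1}^{T} (ℓ_t(A_t) − ℓ_t(x*))² + ln(1/w_1(x*))/ε(x*). -/
lemma log_lb (z : ℝ) (h1 : -(1/2:ℝ) ≤ z) :
    z - z^2 ≤ Real.log (1+z) := by
  have h0 : (0:ℝ) < 1 + z := by linarith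
  rw [Real.le_log_iff_exp_le h0]
  have key : 1 ≤ (1 + z) * Real.exp (z^2 - z) := by
    rcases le_or_gt 0 z with hz | hz
    · have h3 : (z^2 - z) + 1 ≤ Real.exp (z^2 - z) := Real.add_one_le_exp _
      nlinarith [Real.exp_pos (z^2 - z)]
    · have hu : 0 ≤ z^2 - z := by nlinarith
      have h3 : 1 + (z^2 - z) + (z^2 - z)^2/2 ≤ Real.exp (z^2 - z) :=
        Real.quadratic_le_exp_of_nonneg hu
      nlinarith [sq_nonneg z, sq_nonneg (z^2 - z), sq_nonneg (z + 1/2), sq_nonneg (z*(z+1/2))]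
  have h4 : Real.exp (z - z^2) * Real.exp (z^2 - z) = 1 := by
    rw [← Real.exp_add]; ring_nf; exact Real.exp_zero
  nlinarith [Real.exp_pos (z^2 - z), Real.exp_pos (z - z^2)]

/-- Regret bound for multiplicative weights with nonuniform initial
weights and per-expert learning rates. -/
theorem mwm_regret_bound
    {X : Type*} [Fintype X] [Nonempty X]
    (w : ℕ → X → ℝ) (ε : X → ℝ) (ℓ : ℕ → X → ℝ)
    (A : ℕ → X → ℝ) (ℓA : ℕ → ℝ)
    (hw1 : ∀ x, 0 < w 1 x ∧ w 1 x ≤ 1) (hwsum : ∑ x, w 1 x = 1)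
    (hε : ∀ x, 0 < ε x ∧ ε x ≤ 1 / 4)
    (hℓ : ∀ t x, -1 ≤ ℓ t x ∧ ℓ t x ≤ 1)
    (hA : ∀ t x, A t x = w t x * ε x / ∑ y, w t y * ε y)
    (hℓA : ∀ t, ℓA t = ∑ x, A t x * ℓ t x)
    (hrec : ∀ t x, 1 ≤ t → w (t + 1) x = w t x * (1 + ε x * (ℓA t - ℓ t x)))
    (xstar : X) (T : ℕ) :
    ∑ t ∈ Finset.Icc 1 T, ℓA t ≤
      ∑ t ∈ Finset.Icc 1 T, ℓ t xstar
        + ε xstar * ∑ t ∈ Finset.Icc 1 T, (ℓA t - ℓ t xstar) ^ 2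
        + Real.log (1 / w 1 xstar) / ε xstar := by
  have hεpos := fun x => (hε x).1
  -- ℓA bound given positivity at time t
  have hℓAbd : ∀ t, (∀ x, 0 < w t x) → |ℓA t| ≤ 1 := by
    intro t hpos
    have hS : 0 < ∑ y, w t y * ε y :=
      Finset.sum_pos (fun y _ => mul_pos (hpos y) (hεpos y)) Finset.univ_nonempty
    have hAnn : ∀ x, 0 ≤ A t x := by
      intro x; rw [hA]
      exact div_nonneg (mul_pos (hpos x) (hεpos x)).le hS.le
    have hAsum : ∑ x, A t x = 1 := by
      simp only [hA, div_eq_mul_inv, ← Finset.sum_mul]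
      field_simp
    rw [abs_le]
    constructor
    · rw [hℓA]
      calc (-1:ℝ) = ∑ x, A t x * (-1) := by rw [← Finset.sum_mul, hAsum]; ring
        _ ≤ ∑ x, A t x * ℓ t x :=
          Finset.sum_le_sum fun x _ => mul_le_mul_of_nonneg_left (hℓ t x).1 (hAnn x)
    · rw [hℓA]
      calc ∑ x, A t x * ℓ t x ≤ ∑ x, A t x * 1 :=
          Finset.sum_le_sum fun x _ => mul_le_mul_of_nonneg_left (hℓ t x).2 (hAnn x)
        _ = 1 := by rw [← Finset.sum_mul, hAsum]; ring
  -- invariant: positivity and sum = 1 for all t ≥ 1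
  have hinv : ∀ t, 1 ≤ t → (∀ x, 0 < w t x) ∧ ∑ x, w t x = 1 := by
    intro t ht
    induction t, ht using Nat.le_induction with
    | base => exact ⟨fun x => (hw1 x).1, hwsum⟩
    | succ t ht ih =>
      obtain ⟨hpos, hsum⟩ := ih
      have hbd := hℓAbd t hpos
      rw [abs_le] at hbd
      have hS : 0 < ∑ y, w t y * ε y :=
        Finset.sum_pos (fun y _ => mul_pos (hpos y) (hεpos y)) Finset.univ_nonempty
      constructor
      · intro x
        rw [hrec t x ht]
        have h1 : |ε x * (ℓA t - ℓ t x)| ≤ 1/2 := by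
          rw [abs_mul, abs_of_pos (hεpos x)]
          have := (hℓ t x).1; have := (hℓ t x).2
          have h2 : |ℓA t - ℓ t x| ≤ 2 := by rw [abs_le]; constructor <;> linarith
          calc ε x * |ℓA t - ℓ t x| ≤ (1/4) * 2 :=
              mul_le_mul (hε x).2 h2 (abs_nonneg _) (by norm_num)
            _ = 1/2 := by norm_num
        rw [abs_le] at h1
        have : (0:ℝ) < 1 + ε x * (ℓA t - ℓ t x) := by linarith
        exact mul_pos (hpos x) this
      · calc ∑ x, w (t+1) x = ∑ x, (w t x + (w t x * ε x) * ℓA t - (w t x * ε x) * ℓ t x) := by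
              refine Finset.sum_congr rfl fun x _ => ?_
              rw [hrec t x ht]; ring
          _ = ∑ x, w t x + (∑ x, w t x * ε x) * ℓA t - ∑ x, w t x * ε x * ℓ t x := by
              rw [Finset.sum_sub_distrib, Finset.sum_add_distrib, Finset.sum_mul]
          _ = 1 := by
              have : (∑ x, w t x * ε x) * ℓA t = ∑ x, w t x * ε x * ℓ t x := by
                rw [hℓA, Finset.mul_sum]
                refine Finset.sum_congr rfl fun x _ => ?_
                rw [hA]; field_simp; try ring
              rw [this, hsum]; try ring
  -- log step
  have hzbd : ∀ t, 1 ≤ t → -(1/2:ℝ) ≤ ε xstar * (ℓA t - ℓ t xstar) ∧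
      ε xstar * (ℓA t - ℓ t xstar) ≤ 1/2 := by
    intro t ht
    have hbd := hℓAbd t (hinv t ht).1
    rw [abs_le] at hbd
    have h1 := (hℓ t xstar).1; have h2 := (hℓ t xstar).2
    have h3 := (hε xstar).1; have h4 := (hε xstar).2
    constructor <;> nlinarith
  have hlogstep : ∀ t, 1 ≤ t →
      Real.log (w t xstar) + (ε xstar * (ℓA t - ℓ t xstar)
        - (ε xstar * (ℓA t - ℓ t xstar))^2) ≤ Real.log (w (t+1) xstar) := by
    intro t ht
    set z := ε xstar * (ℓA t - ℓ t xstar) with hz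
    obtain ⟨hz1, hz2⟩ := hzbd t ht
    have hwt : 0 < w t xstar := (hinv t ht).1 xstar
    have hfac : (0:ℝ) < 1 + z := by linarith
    rw [hrec t xstar ht, ← hz, Real.log_mul (ne_of_gt hwt) (ne_of_gt hfac)]
    have := log_lb z hz1
    linarith
  -- telescoping
  have htel : ∀ S : ℕ, Real.log (w 1 xstar) +
      ∑ t ∈ Finset.Icc 1 S, (ε xstar * (ℓA t - ℓ t xstar)
        - (ε xstar * (ℓA t - ℓ t xstar))^2) ≤ Real.log (w (S+1) xstar) := by
    intro S
    induction S with
    | zero => simp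
    | succ S ih =>
      rw [Finset.sum_Icc_succ_top (by omega : 1 ≤ S + 1)]
      have := hlogstep (S+1) (by omega)
      linarith
  -- final
  have hup : Real.log (w (T+1) xstar) ≤ 0 := by
    obtain ⟨hpos, hsum⟩ := hinv (T+1) (by omega)
    have h1 : w (T+1) xstar ≤ 1 := by
      rw [← hsum]
      exact Finset.single_le_sum (fun x _ => (hpos x).le) (Finset.mem_univ xstar)
    exact Real.log_nonpos (hpos xstar).le h1
  have key := (htel T).trans hup
  have hsplit : ∑ t ∈ Finset.Icc 1 T, (ε xstar * (ℓA t - ℓ t xstar)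
        - (ε xstar * (ℓA t - ℓ t xstar))^2)
      = ε xstar * (∑ t ∈ Finset.Icc 1 T, ℓA t - ∑ t ∈ Finset.Icc 1 T, ℓ t xstar)
        - ε xstar^2 * ∑ t ∈ Finset.Icc 1 T, (ℓA t - ℓ t xstar)^2 := by
    simp only [mul_sub, Finset.mul_sum, ← Finset.sum_sub_distrib]
    exact Finset.sum_congr rfl fun t _ => by ring
  rw [hsplit] at key
  have hεs : 0 < ε xstar := (hε xstar).1
  have h5 : (∑ t ∈ Finset.Icc 1 T, ℓA t - ∑ t ∈ Finset.Icc 1 T, ℓ t xstar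
      - ε xstar * ∑ t ∈ Finset.Icc 1 T, (ℓA t - ℓ t xstar)^2) * ε xstar
      ≤ -Real.log (w 1 xstar) := by nlinarith [key]
  have h6 := (le_div_iff₀ hεs).mpr h5
  rw [one_div, Real.log_inv]
  linarith
end

section
/- Specialists identity over a product index set: under the stated definitions, Σ_{(x,V)∈X×𝒱} A(x,V)·ℓ^A(x,V) = ℓ(p). -/
/-- Specialists identity over a product index set. -/
theorem specialists_identity_product
    {X V : Type*} [Fintype X] [Fintype V] [Nonempty X] [Nonempty V]
    (A z : X × V → ℝ) (ℓ : X → ℝ)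
    (hA : ∀ q, 0 ≤ A q) (hAsum : ∑ q, A q = 1)
    (hz : ∀ q, 0 ≤ z q ∧ z q ≤ 1)
    (w : X × V → ℝ) (hw : ∀ q, w q = z q * A q)
    (W : ℝ) (hW : W = ∑ q, w q) (hWpos : 0 < W)
    (p : X → ℝ) (hp : ∀ x, p x = (∑ v : V, w (x, v)) / W)
    (ℓp : ℝ) (hℓp : ℓp = ∑ x, p x * ℓ x)
    (ℓA : X × V → ℝ) (hℓA : ∀ q, ℓA q = z q * ℓ q.1 + (1 - z q) * ℓp) :
    ∑ q, A q * ℓA q = ℓp := by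
  have hwl : ∑ q, w q * ℓ q.1 = W * ℓp := by
    rw [hℓp, Finset.mul_sum, Fintype.sum_prod_type]
    refine Finset.sum_congr rfl fun x _ => ?_
    rw [hp]
    simp only [← Finset.sum_mul]
    field_simp
  have : ∑ q, A q * ℓA q = (∑ q, w q * ℓ q.1) + (∑ q, A q) * ℓp - (∑ q, w q) * ℓp := by
    rw [Finset.sum_mul, Finset.sum_mul, ← Finset.sum_add_distrib, ← Finset.sum_sub_distrib]
    refine Finset.sum_congr rfl fun q _ => ?_
    rw [hℓA, hw]; ring
  rw [this, hwl, hAsum, ← hW]; ring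
end

section
/- For Algorithm 1, the excess loss of an expert over the rounds where it participates is bounded by its excess loss on any honest set: for every x ∈ X and every H ⊆ U, Σ_{t=1}^{T} z_t^x·(ℓ_t(x) − ℓ_t(p_t)) ≤ Σ_{t≤T : u_t∈H} (ℓ_t(x) − ℓ_t(p_t)) + 5·√(T·N). -/
lemma key_log {y : ℝ} (h1 : -(1/2:ℝ) ≤ y) (h2 : y ≤ 1/2) :
    y - y^2 ≤ Real.log (1 + y) := by
  have h1y : (0:ℝ) < 1 + y := by linarith
  rw [Real.le_log_iff_exp_le h1y]
  have hx : |y - y^2| ≤ 1 := by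
    rw [abs_le]; constructor <;> nlinarith
  have hb := (abs_le.mp (Real.exp_bound hx (by norm_num : 0 < 4))).2
  have hsum : ∑ m ∈ Finset.range 4, (y - y^2)^m / (Nat.factorial m : ℝ) =
      1 + (y-y^2) + (y-y^2)^2/2 + (y-y^2)^3/6 := by
    simp [Finset.sum_range_succ, Nat.factorial]
  rw [hsum] at hb
  have habs : |y - y^2|^4 = (y-y^2)^4 := by
    rw [← abs_pow, abs_of_nonneg (by positivity)]
  rw [habs] at hb
  norm_num [Nat.factorial] at hb
  have hpoly : 1 + (y - y^2) + (y-y^2)^2/2 + (y-y^2)^3/6 + (y-y^2)^4 * (5/96) ≤ 1 + y := by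
    nlinarith [sq_nonneg y, sq_nonneg (y*(y+1/2)), sq_nonneg (y*(y-1/2)),
      mul_nonneg (mul_nonneg (sq_nonneg y) (by linarith : (0:ℝ) ≤ y + 1/2)) (by linarith : (0:ℝ) ≤ 1/2 - y),
      mul_nonneg (mul_nonneg (mul_nonneg (sq_nonneg y) (sq_nonneg y)) (by linarith : (0:ℝ) ≤ y + 1/2)) (by linarith : (0:ℝ) ≤ 1/2 - y)]
  linarith

lemma telescope (F : ℕ → ℝ) (T : ℕ) :
    ∑ t ∈ Finset.Icc 1 T, (F (t+1) - F t) = F (T+1) - F 1 := by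
  induction T with
  | zero => simp
  | succ n ih =>
      rw [Finset.sum_Icc_succ_top (by omega), ih]
      ring

lemma mw_bound (T : ℕ) (P : ℕ → Prop) [DecidablePred P] (F q : ℕ → ℝ)
    (hpos : ∀ t, 1 ≤ t → t ≤ T + 1 → 0 < F t)
    (hF1 : F 1 = 1/2) (hFT : F (T+1) ≤ 1)
    (hstep : ∀ t, 1 ≤ t → t ≤ T → P t → F (t+1) = F t * (1 + q t))
    (hstep0 : ∀ t, 1 ≤ t → t ≤ T → ¬ P t → F (t+1) = F t)
    (hq : ∀ t, 1 ≤ t → t ≤ T → |q t| ≤ 1/2) :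
    ∑ t ∈ (Finset.Icc 1 T).filter P, q t ≤
      Real.log 2 + ∑ t ∈ (Finset.Icc 1 T).filter P, (q t)^2 := by
  have htel := telescope (fun t => Real.log (F t)) T
  have hlow : ∀ t ∈ Finset.Icc 1 T,
      (if P t then q t - (q t)^2 else 0) ≤ Real.log (F (t+1)) - Real.log (F t) := by
    intro t ht
    rw [Finset.mem_Icc] at ht
    by_cases hP : P t
    · simp only [hP, if_true]
      have hqb := abs_le.mp (hq t ht.1 ht.2)
      have h1q : (0:ℝ) < 1 + q t := by linarith
      rw [hstep t ht.1 ht.2 hP,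
        Real.log_mul (ne_of_gt (hpos t ht.1 (by omega))) (ne_of_gt h1q)]
      have := key_log hqb.1 hqb.2
      linarith
    · simp only [hP, if_false]
      rw [hstep0 t ht.1 ht.2 hP]
      simp
  have hsum := Finset.sum_le_sum hlow
  rw [htel, ← Finset.sum_filter] at hsum
  have hlogT : Real.log (F (T+1)) ≤ 0 :=
    Real.log_nonpos (le_of_lt (hpos (T+1) (by omega) (by omega))) hFT
  have hlog1 : Real.log (F 1) = - Real.log 2 := by
    rw [hF1, show (1/2:ℝ) = 2⁻¹ by norm_num, Real.log_inv]
  rw [hlog1] at hsum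
  rw [Finset.sum_sub_distrib] at hsum
  linarith

lemma abs_small {c r g : ℝ} (hc0 : 0 < c) (hc4 : c ≤ 1/4) (hr0 : 0 ≤ r) (hr1 : r ≤ 1)
    (hg : |g| ≤ 2) : |c * r * g| ≤ 1/2 ∧ (c * r * g)^2 ≤ 4 * c^2 := by
  have h1 : |c * r * g| = c * r * |g| := by
    rw [abs_mul, abs_of_nonneg (by positivity : (0:ℝ) ≤ c * r)]
  constructor
  · rw [h1]
    have h2 : r * |g| ≤ 2 := by
      nlinarith [mul_nonneg (by linarith : (0:ℝ) ≤ 1 - r) (abs_nonneg g), abs_nonneg g]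
    nlinarith [mul_nonneg (by linarith : (0:ℝ) ≤ 1/4 - c) (by linarith : (0:ℝ) ≤ 2 - r * |g|),
      mul_nonneg hr0 (abs_nonneg g)]
  · have h3 : (c * r * g)^2 = c^2 * (r^2 * g^2) := by ring
    rw [h3]
    have hg2 : g^2 ≤ 4 := by nlinarith [abs_nonneg g, sq_abs g]
    have hr2 : r^2 ≤ 1 := by nlinarith
    have h4 : r^2 * g^2 ≤ 4 := by
      nlinarith [mul_le_mul_of_nonneg_right hr2 (sq_nonneg g)]
    nlinarith [mul_le_mul_of_nonneg_left h4 (sq_nonneg c)]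

set_option maxHeartbeats 1000000 in
/-- For Algorithm 1, the excess loss of an expert over the rounds where
it participates is bounded by its excess loss on any honest set, up to 5·√(T·N). -/
theorem algorithm1_reverse_lemma
    {U X : Type*} [Fintype U] [Fintype X] [DecidableEq U]
    (N M T : ℕ)
    (hcardU : Fintype.card U = N) (hcardX : Fintype.card X = M)
    (hN1 : 1 ≤ N) (hM2 : 2 ≤ M)
    (hTN : 16 * N ≤ T) (hTM : 16 * Real.log M ≤ (T : ℝ))
    (u : ℕ → U) (ℓ : ℕ → X → ℝ)
    (hℓ : ∀ t x, -1 ≤ ℓ t x ∧ ℓ t x ≤ 1)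
    (εA εB : ℝ)
    (hεA : εA = Real.sqrt (Real.log M / T))
    (hεB : εB = Real.sqrt ((N : ℝ) / T))
    (a : ℕ → X → ℝ) (β : ℕ → X → U → ℝ)
    (ha1 : ∀ x, a 1 x = 1 / M)
    (hβ1 : ∀ x v, β 1 x v = 1 / 2)
    (z : ℕ → X → ℝ) (hz : ∀ t x, z t x = β t x (u t))
    (w : ℕ → X → ℝ) (hw : ∀ t x, w t x = z t x * a t x)
    (W : ℕ → ℝ) (hW : ∀ t, W t = ∑ x, w t x)
    (p : ℕ → X → ℝ) (hp : ∀ t x, p t x = w t x / W t)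
    (ℓp : ℕ → ℝ) (hℓp : ∀ t, ℓp t = ∑ x, p t x * ℓ t x)
    (ℓA : ℕ → X → ℝ)
    (hℓA : ∀ t x, ℓA t x = z t x * ℓ t x + (1 - z t x) * ℓp t)
    (ha : ∀ t x, 1 ≤ t →
      a (t + 1) x = a t x * (1 + εA * ((∑ y, a t y * ℓA t y) - ℓA t x)))
    (hβu : ∀ t x, 1 ≤ t →
      β (t + 1) x (u t) = β t x (u t) *
        (1 + εB * ((β t x (u t) * ℓ t x + (1 - β t x (u t)) * ℓp t) - ℓ t x)))
    (hβo : ∀ t x v, 1 ≤ t → v ≠ u t → β (t + 1) x v = β t x v)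
    (hapos : ∀ t x, 1 ≤ t → 0 < a t x)
    (hasum : ∀ t, 1 ≤ t → ∑ x, a t x = 1)
    (hβpos : ∀ t x v, 1 ≤ t → 0 < β t x v ∧ β t x v < 1)
    (hWpos : ∀ t, 1 ≤ t → 0 < W t)
    (x : X) (H : Finset U) :
    ∑ t ∈ Finset.Icc 1 T, z t x * (ℓ t x - ℓp t) ≤
      (∑ t ∈ (Finset.Icc 1 T).filter (fun t => u t ∈ H), (ℓ t x - ℓp t))
        + 5 * Real.sqrt ((T : ℝ) * N) := by
  classical
  have hT16 : 16 ≤ T := by omega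
  have hT0 : (0:ℝ) < T := by exact_mod_cast Nat.pos_of_ne_zero (by omega)
  have hN0 : (0:ℝ) < N := by exact_mod_cast hN1
  set c := εB with hcdef
  have hc0 : 0 < c := by rw [hεB]; apply Real.sqrt_pos.mpr; positivity
  have hc4 : c ≤ 1/4 := by
    rw [hεB]
    have h : (N:ℝ)/T ≤ 1/16 := by
      rw [div_le_div_iff₀ hT0 (by norm_num)]
      have : (16:ℝ) * N ≤ T := by exact_mod_cast hTN
      linarith
    calc Real.sqrt ((N:ℝ)/T) ≤ Real.sqrt (1/16) := Real.sqrt_le_sqrt h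
      _ = 1/4 := by
        rw [show (1/16:ℝ) = (1/4)^2 by norm_num, Real.sqrt_sq (by norm_num)]
  -- bounds on ℓp and the gain ℓ t x - ℓp t
  have hpnn : ∀ t, 1 ≤ t → ∀ y : X, 0 ≤ p t y := by
    intro t ht y
    rw [hp, hw, hz]
    have h1 := (hβpos t y (u t) ht).1
    have h2 := hapos t y ht
    have h3 := hWpos t ht
    positivity
  have hpsum : ∀ t, 1 ≤ t → ∑ y, p t y = 1 := by
    intro t ht
    simp only [hp]
    rw [← Finset.sum_div, ← hW, div_self (ne_of_gt (hWpos t ht))]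
  have hℓpb : ∀ t, 1 ≤ t → -1 ≤ ℓp t ∧ ℓp t ≤ 1 := by
    intro t ht
    constructor
    · rw [hℓp]
      calc (-1:ℝ) = ∑ y : X, p t y * (-1) := by
            rw [← Finset.sum_mul, hpsum t ht]; ring
        _ ≤ ∑ y : X, p t y * ℓ t y := Finset.sum_le_sum (fun y _ => by
            have := hpnn t ht y; have := (hℓ t y).1; nlinarith)
    · rw [hℓp]
      calc ∑ y : X, p t y * ℓ t y ≤ ∑ y : X, p t y * 1 :=
            Finset.sum_le_sum (fun y _ => by
              have := hpnn t ht y; have := (hℓ t y).2; nlinarith)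
        _ = 1 := by rw [← Finset.sum_mul, hpsum t ht]; ring
  have hgb : ∀ t, 1 ≤ t → |ℓ t x - ℓp t| ≤ 2 := by
    intro t ht
    have h1 := hℓ t x
    have h2 := hℓpb t ht
    rw [abs_le]
    exact ⟨by linarith [h1.1, h2.2], by linarith [h1.2, h2.1]⟩
  -- per-user multiplicative weight bounds
  have keyA : ∀ v : U,
      ∑ t ∈ (Finset.Icc 1 T).filter (fun t => u t = v),
        (c * β t x v * (ℓ t x - ℓp t)) ≤
      Real.log 2 +
        (((Finset.Icc 1 T).filter (fun t => u t = v)).card : ℝ) * (4*c^2) := by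
    intro v
    have hsmall : ∀ t, 1 ≤ t → |c * β t x v * (ℓ t x - ℓp t)| ≤ 1/2 ∧
        (c * β t x v * (ℓ t x - ℓp t))^2 ≤ 4 * c^2 := fun t h1 =>
      abs_small hc0 hc4 (hβpos t x v h1).1.le (hβpos t x v h1).2.le (hgb t h1)
    have hA := mw_bound T (fun t => u t = v) (fun t => 1 - β t x v)
      (fun t => c * β t x v * (ℓ t x - ℓp t))
      (fun t h1 _ => by have := (hβpos t x v h1).2; linarith)
      (by rw [hβ1]; norm_num)
      (by have := (hβpos (T+1) x v (by omega)).1; linarith)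
      (fun t h1 h2 hP => by
        have hr := hβu t x h1
        rw [hP] at hr
        rw [hr]; ring)
      (fun t h1 h2 hP => by
        rw [hβo t x v h1 (fun h => hP h.symm)])
      (fun t h1 h2 => (hsmall t h1).1)
    have hq2 : ∑ t ∈ (Finset.Icc 1 T).filter (fun t => u t = v),
        (c * β t x v * (ℓ t x - ℓp t))^2 ≤
        (((Finset.Icc 1 T).filter (fun t => u t = v)).card : ℝ) * (4*c^2) := by
      rw [← nsmul_eq_mul]
      apply Finset.sum_le_card_nsmul
      intro t ht
      rw [Finset.mem_filter, Finset.mem_Icc] at ht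
      exact (hsmall t ht.1.1).2
    linarith
  have keyB : ∀ v : U,
      ∑ t ∈ (Finset.Icc 1 T).filter (fun t => u t = v),
        (c * (β t x v - 1) * (ℓ t x - ℓp t)) ≤
      Real.log 2 +
        (((Finset.Icc 1 T).filter (fun t => u t = v)).card : ℝ) * (4*c^2) := by
    intro v
    have hsmall : ∀ t, 1 ≤ t → |c * (β t x v - 1) * (ℓ t x - ℓp t)| ≤ 1/2 ∧
        (c * (β t x v - 1) * (ℓ t x - ℓp t))^2 ≤ 4 * c^2 := by
      intro t h1
      have hβb := hβpos t x v h1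
      have h := abs_small (r := 1 - β t x v) (g := -(ℓ t x - ℓp t)) hc0 hc4
        (by linarith [hβb.2]) (by linarith [hβb.1])
        (by rw [abs_neg]; exact hgb t h1)
      have he : c * (1 - β t x v) * (-(ℓ t x - ℓp t)) =
          c * (β t x v - 1) * (ℓ t x - ℓp t) := by ring
      rw [he] at h
      exact h
    have hB := mw_bound T (fun t => u t = v) (fun t => β t x v)
      (fun t => c * (β t x v - 1) * (ℓ t x - ℓp t))
      (fun t h1 _ => (hβpos t x v h1).1)
      (hβ1 x v)
      (le_of_lt (hβpos (T+1) x v (by omega)).2)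
      (fun t h1 h2 hP => by
        have hr := hβu t x h1
        rw [hP] at hr
        rw [hr]; ring)
      (fun t h1 h2 hP => hβo t x v h1 (fun h => hP h.symm))
      (fun t h1 h2 => (hsmall t h1).1)
    have hq2 : ∑ t ∈ (Finset.Icc 1 T).filter (fun t => u t = v),
        (c * (β t x v - 1) * (ℓ t x - ℓp t))^2 ≤
        (((Finset.Icc 1 T).filter (fun t => u t = v)).card : ℝ) * (4*c^2) := by
      rw [← nsmul_eq_mul]
      apply Finset.sum_le_card_nsmul
      intro t ht
      rw [Finset.mem_filter, Finset.mem_Icc] at ht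
      exact (hsmall t ht.1.1).2
    linarith
  -- combine per user
  have hv : ∀ v : U,
      ∑ t ∈ (Finset.Icc 1 T).filter (fun t => u t = v),
        (c * β t x (u t) * (ℓ t x - ℓp t)) ≤
      (∑ t ∈ (Finset.Icc 1 T).filter (fun t => u t = v),
        (if u t ∈ H then c * (ℓ t x - ℓp t) else 0)) +
      (Real.log 2 +
        (((Finset.Icc 1 T).filter (fun t => u t = v)).card : ℝ) * (4*c^2)) := by
    intro v
    have hcongr : ∑ t ∈ (Finset.Icc 1 T).filter (fun t => u t = v),
        (c * β t x (u t) * (ℓ t x - ℓp t)) =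
        ∑ t ∈ (Finset.Icc 1 T).filter (fun t => u t = v),
        (c * β t x v * (ℓ t x - ℓp t)) := by
      apply Finset.sum_congr rfl
      intro t ht
      rw [(Finset.mem_filter.mp ht).2]
    rw [hcongr]
    by_cases hvH : v ∈ H
    · have hif : ∑ t ∈ (Finset.Icc 1 T).filter (fun t => u t = v),
          (if u t ∈ H then c * (ℓ t x - ℓp t) else 0) =
          ∑ t ∈ (Finset.Icc 1 T).filter (fun t => u t = v),
          (c * (ℓ t x - ℓp t)) := by
        apply Finset.sum_congr rfl
        intro t ht
        rw [(Finset.mem_filter.mp ht).2, if_pos hvH]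
      rw [hif]
      have hsplit : ∑ t ∈ (Finset.Icc 1 T).filter (fun t => u t = v),
          (c * β t x v * (ℓ t x - ℓp t)) -
          ∑ t ∈ (Finset.Icc 1 T).filter (fun t => u t = v),
          (c * (ℓ t x - ℓp t)) =
          ∑ t ∈ (Finset.Icc 1 T).filter (fun t => u t = v),
          (c * (β t x v - 1) * (ℓ t x - ℓp t)) := by
        rw [← Finset.sum_sub_distrib]
        apply Finset.sum_congr rfl
        intro t _
        ring
      have := keyB v
      linarith
    · have hif : ∑ t ∈ (Finset.Icc 1 T).filter (fun t => u t = v),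
          (if u t ∈ H then c * (ℓ t x - ℓp t) else 0) = 0 := by
        apply Finset.sum_eq_zero
        intro t ht
        rw [(Finset.mem_filter.mp ht).2, if_neg hvH]
      rw [hif]
      have := keyA v
      linarith
  -- sum over all users
  have hsumv := Finset.sum_le_sum (fun v (_ : v ∈ Finset.univ) => hv v)
  rw [Finset.sum_fiberwise (Finset.Icc 1 T) u
    (fun t => c * β t x (u t) * (ℓ t x - ℓp t))] at hsumv
  rw [Finset.sum_add_distrib] at hsumv
  rw [Finset.sum_fiberwise (Finset.Icc 1 T) u
    (fun t => if u t ∈ H then c * (ℓ t x - ℓp t) else 0)] at hsumv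
  rw [← Finset.sum_filter] at hsumv
  have hcards : ∑ v : U, (((Finset.Icc 1 T).filter (fun t => u t = v)).card : ℝ) =
      (T : ℝ) := by
    have h := Finset.card_eq_sum_card_fiberwise
      (f := u) (s := Finset.Icc 1 T) (t := Finset.univ)
      (fun t _ => Finset.mem_univ _)
    have h2 : ((Finset.Icc 1 T).card : ℝ) = ∑ v : U,
        (((Finset.Icc 1 T).filter (fun t => u t = v)).card : ℝ) := by
      rw [h]; push_cast; ring
    rw [← h2, Nat.card_Icc]
    norm_num
  have hconsts : ∑ v : U, (Real.log 2 +
      (((Finset.Icc 1 T).filter (fun t => u t = v)).card : ℝ) * (4*c^2)) =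
      (N : ℝ) * Real.log 2 + (T : ℝ) * (4*c^2) := by
    rw [Finset.sum_add_distrib, Finset.sum_const, ← Finset.sum_mul, hcards,
      Finset.card_univ, hcardU, nsmul_eq_mul]
  rw [hconsts] at hsumv
  -- numeric identities
  have hc2 : c^2 = (N : ℝ) / T := by
    rw [hεB, Real.sq_sqrt (by positivity)]
  have hcS : c * Real.sqrt ((T : ℝ) * N) = (N : ℝ) := by
    rw [hεB, ← Real.sqrt_mul (by positivity)]
    rw [show (N : ℝ) / T * ((T:ℝ) * N) = (N:ℝ)^2 by field_simp]
    exact Real.sqrt_sq hN0.le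
  have hlog2 : Real.log 2 ≤ 1 := by
    have := Real.log_two_lt_d9
    linarith
  -- finish
  have hfin : c * (∑ t ∈ Finset.Icc 1 T, β t x (u t) * (ℓ t x - ℓp t)) ≤
      c * ((∑ t ∈ (Finset.Icc 1 T).filter (fun t => u t ∈ H), (ℓ t x - ℓp t))
        + 5 * Real.sqrt ((T : ℝ) * N)) := by
    have e1 : ∑ t ∈ Finset.Icc 1 T, (c * β t x (u t) * (ℓ t x - ℓp t)) =
        c * ∑ t ∈ Finset.Icc 1 T, β t x (u t) * (ℓ t x - ℓp t) := by
      rw [Finset.mul_sum]; apply Finset.sum_congr rfl; intro t _; ring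
    have e2 : ∑ t ∈ (Finset.Icc 1 T).filter (fun t => u t ∈ H),
        (c * (ℓ t x - ℓp t)) =
        c * ∑ t ∈ (Finset.Icc 1 T).filter (fun t => u t ∈ H), (ℓ t x - ℓp t) := by
      rw [Finset.mul_sum]
    rw [e1, e2] at hsumv
    have hnum : (N : ℝ) * Real.log 2 + (T : ℝ) * (4*c^2) ≤
        c * (5 * Real.sqrt ((T:ℝ)*N)) := by
      have hTc : (T:ℝ) * c^2 = N := by
        rw [hc2]
        field_simp
      rw [show c * (5 * Real.sqrt ((T:ℝ)*N)) = 5 * (c * Real.sqrt ((T:ℝ)*N)) by ring,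
        hcS, show (T:ℝ) * (4*c^2) = 4 * ((T:ℝ) * c^2) by ring, hTc]
      nlinarith [hN0, hlog2]
    calc c * (∑ t ∈ Finset.Icc 1 T, β t x (u t) * (ℓ t x - ℓp t)) ≤
        c * (∑ t ∈ (Finset.Icc 1 T).filter (fun t => u t ∈ H), (ℓ t x - ℓp t))
          + ((N : ℝ) * Real.log 2 + (T : ℝ) * (4*c^2)) := by linarith
      _ ≤ c * (∑ t ∈ (Finset.Icc 1 T).filter (fun t => u t ∈ H), (ℓ t x - ℓp t))
          + c * (5 * Real.sqrt ((T:ℝ)*N)) := by linarith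
      _ = c * ((∑ t ∈ (Finset.Icc 1 T).filter (fun t => u t ∈ H), (ℓ t x - ℓp t))
          + 5 * Real.sqrt ((T : ℝ) * N)) := by ring
  have hgoal := le_of_mul_le_mul_left (by
    calc c * (∑ t ∈ Finset.Icc 1 T, z t x * (ℓ t x - ℓp t)) =
        c * (∑ t ∈ Finset.Icc 1 T, β t x (u t) * (ℓ t x - ℓp t)) := by
          congr 1; apply Finset.sum_congr rfl; intro t _; rw [hz]
      _ ≤ _ := hfin) hc0
  exact hgoal
end

section
/- For Algorithm 1, the excess loss of an expert in the rounds where it participates cannot be too large: for every x ∈ X, Σ_{t=1}^{T} z_t^x·(ℓ_t(p_t) − ℓ_t(x)) ≤ 5·√(T·ln M). -/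
set_option maxHeartbeats 1000000

lemma key_log_ineq (y : ℝ) (h : |y| ≤ 1/2) : y - y^2 ≤ Real.log (1+y) := by
  have h1 : |(-y)| < 1 := by rw [abs_neg]; linarith
  have H := Real.abs_log_sub_add_sum_range_le h1 4
  rw [show (1 : ℝ) - (-y) = 1 + y by ring] at H
  rw [abs_neg] at H
  have hs : (∑ i ∈ Finset.range 4, (-y) ^ (i + 1) / (i + 1)) =
      -y + y^2/2 - y^3/3 + y^4/4 := by
    simp [Finset.sum_range_succ]
    ring
  rw [hs] at H
  have h2 : |y|^(4+1) / (1 - |y|) ≤ 2 * |y|^5 := by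
    rw [div_le_iff₀ (by linarith [abs_nonneg y])]
    have h5 : 0 ≤ |y|^5 := by positivity
    have : (4:ℕ)+1 = 5 := rfl
    rw [this]
    nlinarith [mul_nonneg h5 (by linarith : (0:ℝ) ≤ 1 - 2*|y|)]
  have H1 := (abs_le.mp H).1
  have H3 : -(2 * |y|^5) ≤ -y + y^2/2 - y^3/3 + y^4/4 + Real.log (1+y) := by
    refine le_trans ?_ H1
    simp only [neg_le_neg_iff]
    exact h2
  rcases abs_cases y with ⟨he, hy0⟩ | ⟨he, hy0⟩
  · rw [he] at H3 h
    nlinarith [sq_nonneg y, pow_nonneg hy0 3, pow_nonneg hy0 5, sq_nonneg (y^2)]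
  · rw [he] at H3 h
    nlinarith [sq_nonneg y, sq_nonneg (y^2), sq_nonneg (y + y^2), sq_nonneg (y^2 + y^3)]



/-- For Algorithm 1, the excess loss of an expert in the rounds where it
participates cannot be too large: at most 5·√(T·ln M). -/
theorem algorithm1_specialist_lemma
    {U X : Type*} [Fintype U] [Fintype X] [DecidableEq U]
    (N M T : ℕ)
    (hcardU : Fintype.card U = N) (hcardX : Fintype.card X = M)
    (hN1 : 1 ≤ N) (hM2 : 2 ≤ M)
    (hTN : 16 * N ≤ T) (hTM : 16 * Real.log M ≤ (T : ℝ))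
    (u : ℕ → U) (ℓ : ℕ → X → ℝ)
    (hℓ : ∀ t x, -1 ≤ ℓ t x ∧ ℓ t x ≤ 1)
    (εA εB : ℝ)
    (hεA : εA = Real.sqrt (Real.log M / T))
    (hεB : εB = Real.sqrt ((N : ℝ) / T))
    (a : ℕ → X → ℝ) (β : ℕ → X → U → ℝ)
    (ha1 : ∀ x, a 1 x = 1 / M)
    (hβ1 : ∀ x v, β 1 x v = 1 / 2)
    (z : ℕ → X → ℝ) (hz : ∀ t x, z t x = β t x (u t))
    (w : ℕ → X → ℝ) (hw : ∀ t x, w t x = z t x * a t x)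
    (W : ℕ → ℝ) (hW : ∀ t, W t = ∑ x, w t x)
    (p : ℕ → X → ℝ) (hp : ∀ t x, p t x = w t x / W t)
    (ℓp : ℕ → ℝ) (hℓp : ∀ t, ℓp t = ∑ x, p t x * ℓ t x)
    (ℓA : ℕ → X → ℝ)
    (hℓA : ∀ t x, ℓA t x = z t x * ℓ t x + (1 - z t x) * ℓp t)
    (ha : ∀ t x, 1 ≤ t →
      a (t + 1) x = a t x * (1 + εA * ((∑ y, a t y * ℓA t y) - ℓA t x)))
    (hβu : ∀ t x, 1 ≤ t →
      β (t + 1) x (u t) = β t x (u t) *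
        (1 + εB * ((β t x (u t) * ℓ t x + (1 - β t x (u t)) * ℓp t) - ℓ t x)))
    (hβo : ∀ t x v, 1 ≤ t → v ≠ u t → β (t + 1) x v = β t x v)
    (hapos : ∀ t x, 1 ≤ t → 0 < a t x)
    (hasum : ∀ t, 1 ≤ t → ∑ x, a t x = 1)
    (hβpos : ∀ t x v, 1 ≤ t → 0 < β t x v ∧ β t x v < 1)
    (hWpos : ∀ t, 1 ≤ t → 0 < W t)
    (x : X) :
    ∑ t ∈ Finset.Icc 1 T, z t x * (ℓp t - ℓ t x) ≤
      5 * Real.sqrt ((T : ℝ) * Real.log M) := by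
  have hT0 : 0 < T := by omega
  have hT0' : (0:ℝ) < T := by exact_mod_cast hT0
  have hM1 : (1:ℝ) < M := by exact_mod_cast hM2.trans_lt' one_lt_two
  have hMpos : (0:ℝ) < M := by linarith
  have hlogM : 0 < Real.log M := Real.log_pos hM1
  have hεA_pos : 0 < εA := by
    rw [hεA]; exact Real.sqrt_pos.mpr (div_pos hlogM hT0')
  have hεA_le : εA ≤ 1/4 := by
    rw [hεA, show (1/4:ℝ) = Real.sqrt ((1/4)^2) by rw [Real.sqrt_sq]; norm_num]
    apply Real.sqrt_le_sqrt
    rw [div_le_iff₀ hT0']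
    nlinarith
  -- z bounds
  have hzb : ∀ t, 1 ≤ t → 0 < z t x ∧ z t x < 1 := by
    intro t ht; rw [hz]; exact hβpos t x (u t) ht
  -- ℓp bounds
  have hℓpb : ∀ t, 1 ≤ t → |ℓp t| ≤ 1 := by
    intro t ht
    have hpnn : ∀ y : X, 0 ≤ p t y := by
      intro y
      rw [hp, hw]
      have := hβpos t y (u t) ht
      have := hapos t y ht
      have := hWpos t ht
      have hzy : 0 < z t y := by rw [hz]; exact (hβpos t y (u t) ht).1
      positivity
    have hpsum : ∑ y : X, p t y = 1 := by
      simp only [hp]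
      rw [← Finset.sum_div, ← hW]
      exact div_self (hWpos t ht).ne'
    rw [hℓp]
    calc |∑ y : X, p t y * ℓ t y| ≤ ∑ y : X, |p t y * ℓ t y| :=
          Finset.abs_sum_le_sum_abs _ _
      _ ≤ ∑ y : X, p t y := by
          apply Finset.sum_le_sum
          intro y _
          rw [abs_mul, abs_of_nonneg (hpnn y)]
          have h1 : |ℓ t y| ≤ 1 := abs_le.mpr (hℓ t y)
          nlinarith [hpnn y]
      _ = 1 := hpsum
  -- the mean of ℓA under a is ℓp
  have hmean : ∀ t, 1 ≤ t → (∑ y, a t y * ℓA t y) = ℓp t := by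
    intro t ht
    have hWt := hWpos t ht
    have e1 : ∑ y, w t y * ℓ t y = W t * ℓp t := by
      rw [hℓp, Finset.mul_sum]
      apply Finset.sum_congr rfl
      intro y _
      rw [hp]
      field_simp
    calc ∑ y, a t y * ℓA t y
        = ∑ y, (w t y * ℓ t y + (a t y - w t y) * ℓp t) := by
          apply Finset.sum_congr rfl
          intro y _
          rw [hℓA, hw]; ring
      _ = (∑ y, w t y * ℓ t y) + ((∑ y, a t y) - ∑ y, w t y) * ℓp t := by
          rw [Finset.sum_add_distrib, ← Finset.sum_mul, Finset.sum_sub_distrib]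
      _ = W t * ℓp t + (1 - W t) * ℓp t := by rw [e1, hasum t ht, hW]
      _ = ℓp t := by ring
  -- recursion in terms of d
  have hrec : ∀ t, 1 ≤ t →
      a (t+1) x = a t x * (1 + εA * (z t x * (ℓp t - ℓ t x))) := by
    intro t ht
    rw [ha t x ht, hmean t ht, hℓA]
    ring
  -- bound on d
  have hDb : ∀ t, 1 ≤ t → |z t x * (ℓp t - ℓ t x)| ≤ 2 := by
    intro t ht
    rw [abs_mul]
    have h1 := hzb t ht
    have h2 := hℓpb t ht
    have h3 : |ℓ t x| ≤ 1 := abs_le.mpr (hℓ t x)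
    have h4 : |ℓp t - ℓ t x| ≤ 2 := by
      have := abs_sub_abs_le_abs_sub (ℓp t) (ℓ t x)
      calc |ℓp t - ℓ t x| ≤ |ℓp t| + |ℓ t x| := abs_sub _ _
        _ ≤ 2 := by linarith
    rw [abs_of_pos h1.1]
    nlinarith [abs_nonneg (ℓp t - ℓ t x)]
  have hyb : ∀ t, 1 ≤ t → |εA * (z t x * (ℓp t - ℓ t x))| ≤ 1/2 := by
    intro t ht
    rw [abs_mul, abs_of_pos hεA_pos]
    have := hDb t ht
    nlinarith [abs_nonneg (z t x * (ℓp t - ℓ t x))]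
  have hpos1 : ∀ t, 1 ≤ t → 0 < 1 + εA * (z t x * (ℓp t - ℓ t x)) := by
    intro t ht
    have := abs_le.mp (hyb t ht)
    linarith [this.1]
  -- product formula
  have hprod : ∀ n : ℕ, a (n+1) x =
      a 1 x * ∏ t ∈ Finset.Icc 1 n, (1 + εA * (z t x * (ℓp t - ℓ t x))) := by
    intro n
    induction n with
    | zero => simp
    | succ n ih =>
        rw [Finset.prod_Icc_succ_top (by omega), hrec (n+1) (by omega), ih]
        ring
  have hle1 : a (T+1) x ≤ 1 := by
    rw [← hasum (T+1) (by omega)]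
    exact Finset.single_le_sum (fun y _ => (hapos (T+1) y (by omega)).le)
      (Finset.mem_univ x)
  have hprodpos : 0 < ∏ t ∈ Finset.Icc 1 T, (1 + εA * (z t x * (ℓp t - ℓ t x))) :=
    Finset.prod_pos (fun t ht => hpos1 t (Finset.mem_Icc.mp ht).1)
  have hprodle : (∏ t ∈ Finset.Icc 1 T, (1 + εA * (z t x * (ℓp t - ℓ t x)))) ≤ M := by
    have h := hprod T
    rw [ha1 x] at h
    have : a (T+1) x * M = ∏ t ∈ Finset.Icc 1 T, (1 + εA * (z t x * (ℓp t - ℓ t x))) := by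
      rw [h]; field_simp
    rw [← this]
    nlinarith [hle1, hMpos]
  have hlogsum : ∑ t ∈ Finset.Icc 1 T, Real.log (1 + εA * (z t x * (ℓp t - ℓ t x)))
      ≤ Real.log M := by
    rw [← Real.log_prod (fun t ht => (hpos1 t (Finset.mem_Icc.mp ht).1).ne')]
    exact Real.log_le_log hprodpos hprodle
  -- lower bound on each log term
  have hlower : ∀ t ∈ Finset.Icc 1 T,
      εA * (z t x * (ℓp t - ℓ t x)) - (εA * (z t x * (ℓp t - ℓ t x)))^2
        ≤ Real.log (1 + εA * (z t x * (ℓp t - ℓ t x))) :=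
    fun t ht => key_log_ineq _ (hyb t (Finset.mem_Icc.mp ht).1)
  have hsum1 : ∑ t ∈ Finset.Icc 1 T,
      (εA * (z t x * (ℓp t - ℓ t x)) - (εA * (z t x * (ℓp t - ℓ t x)))^2)
      ≤ Real.log M :=
    le_trans (Finset.sum_le_sum hlower) hlogsum
  have hsq : ∑ t ∈ Finset.Icc 1 T, (εA * (z t x * (ℓp t - ℓ t x)))^2
      ≤ εA^2 * (4 * T) := by
    have : ∀ t ∈ Finset.Icc 1 T,
        (εA * (z t x * (ℓp t - ℓ t x)))^2 ≤ εA^2 * 4 := by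
      intro t ht
      have hd := hDb t (Finset.mem_Icc.mp ht).1
      have : (z t x * (ℓp t - ℓ t x))^2 ≤ 4 := by
        nlinarith [abs_nonneg (z t x * (ℓp t - ℓ t x)), sq_abs (z t x * (ℓp t - ℓ t x))]
      nlinarith [sq_nonneg εA]
    calc ∑ t ∈ Finset.Icc 1 T, (εA * (z t x * (ℓp t - ℓ t x)))^2
        ≤ ∑ t ∈ Finset.Icc 1 T, εA^2 * 4 := Finset.sum_le_sum this
      _ = εA^2 * (4 * T) := by
          rw [Finset.sum_const, Nat.card_Icc]
          simp
          ring
  have hmain : εA * (∑ t ∈ Finset.Icc 1 T, z t x * (ℓp t - ℓ t x))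
      ≤ Real.log M + εA^2 * (4 * T) := by
    have e : ∑ t ∈ Finset.Icc 1 T,
        (εA * (z t x * (ℓp t - ℓ t x)) - (εA * (z t x * (ℓp t - ℓ t x)))^2)
        = εA * (∑ t ∈ Finset.Icc 1 T, z t x * (ℓp t - ℓ t x))
          - ∑ t ∈ Finset.Icc 1 T, (εA * (z t x * (ℓp t - ℓ t x)))^2 := by
      rw [Finset.sum_sub_distrib, Finset.mul_sum]
    rw [e] at hsum1
    linarith
  have hfinal : ∑ t ∈ Finset.Icc 1 T, z t x * (ℓp t - ℓ t x)
      ≤ Real.log M / εA + εA * (4 * T) := by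
    rw [div_add' _ _ _ hεA_pos.ne', le_div_iff₀ hεA_pos]
    nlinarith [hmain]
  have e2 : Real.log M / εA = Real.sqrt ((T:ℝ) * Real.log M) := by
    have hmul : εA * Real.sqrt ((T:ℝ) * Real.log M) = Real.log M := by
      rw [hεA, ← Real.sqrt_mul (by positivity)]
      rw [show Real.log M / (T:ℝ) * ((T:ℝ) * Real.log M) = (Real.log M)^2 by
        field_simp]
      exact Real.sqrt_sq hlogM.le
    rw [div_eq_iff hεA_pos.ne']
    linarith [hmul]
  have e3 : εA * (T:ℝ) = Real.sqrt ((T:ℝ) * Real.log M) := by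
    have hsq2 : (εA * (T:ℝ))^2 = (T:ℝ) * Real.log M := by
      rw [mul_pow, hεA, Real.sq_sqrt (by positivity)]
      field_simp
    rw [← Real.sqrt_sq (by positivity : (0:ℝ) ≤ εA * (T:ℝ)), hsq2]
  calc ∑ t ∈ Finset.Icc 1 T, z t x * (ℓp t - ℓ t x)
      ≤ Real.log M / εA + εA * (4 * T) := hfinal
    _ = Real.sqrt ((T:ℝ) * Real.log M) + 4 * (εA * (T:ℝ)) := by rw [e2]; ring
    _ = 5 * Real.sqrt ((T:ℝ) * Real.log M) := by rw [e3]; ring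
end

section
/- Regret bound for the basic collaborative algorithm: for every expert x ∈ X and every set of users H ⊆ U, Algorithm 1 satisfies Σ_{t≤T : u_t∈H} ℓ_t(p_t) ≤ Σ_{t≤T : u_t∈H} ℓ_t(x) + 10·√(T·(ln M + N)). -/
lemma log_one_add_lb {y : ℝ} (h1 : -(1/2) ≤ y) (h2 : y ≤ 1/2) :
    y - 3/2 * y^2 ≤ Real.log (1+y) := by
  have h0 : (0:ℝ) < 1 + y := by linarith
  rcases le_or_gt 0 y with hy | hy
  · have h3 := Real.log_le_sub_one_of_pos (x := (1+y)⁻¹) (by positivity)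
    rw [Real.log_inv] at h3
    have h5 : y - 3/2*y^2 ≤ 1 - (1+y)⁻¹ := by
      have hc : (1+y) * (1+y)⁻¹ = 1 := mul_inv_cancel₀ h0.ne'
      nlinarith [sq_nonneg y, inv_nonneg.mpr h0.le, mul_nonneg (mul_nonneg hy hy) hy]
    linarith
  · have hu0 : 0 ≤ 3/2*y^2 - y := by nlinarith [sq_nonneg y]
    have he : 1 + (3/2*y^2 - y)/2 ≤ Real.exp ((3/2*y^2 - y)/2) := by
      have := Real.add_one_le_exp ((3/2*y^2 - y)/2); linarith
    have hsq : (1 + (3/2*y^2 - y)/2)^2 ≤ Real.exp (3/2*y^2 - y) := by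
      calc (1 + (3/2*y^2 - y)/2)^2 ≤ Real.exp ((3/2*y^2 - y)/2)^2 := by
            apply pow_le_pow_left₀ (by positivity) he
        _ = Real.exp (3/2*y^2 - y) := by rw [sq, ← Real.exp_add]; norm_num
    have h6 : y - 3/2*y^2 = -(3/2*y^2 - y) := by ring
    rw [h6, Real.le_log_iff_exp_le h0, Real.exp_neg]
    have hq : (0:ℝ) < (1 + (3/2*y^2 - y)/2)^2 := by positivity
    have h7 : (Real.exp (3/2*y^2 - y))⁻¹ ≤ ((1 + (3/2*y^2 - y)/2)^2)⁻¹ := by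
      apply inv_anti₀ hq hsq
    have h8 : ((1 + (3/2*y^2 - y)/2)^2)⁻¹ ≤ 1 + y := by
      rw [inv_eq_one_div, div_le_iff₀ hq]
      nlinarith [mul_nonneg (sq_nonneg y) (by linarith : (0:ℝ) ≤ 1/2 + y),
        mul_nonneg (mul_nonneg (sq_nonneg y) (neg_nonneg.mpr hy.le)) (by linarith : (0:ℝ) ≤ 1/2 + y),
        mul_nonneg (mul_nonneg (sq_nonneg y) (sq_nonneg y)) (by linarith : (0:ℝ) ≤ 1/2 + y)]
    linarith


lemma mw_bound_s6 (g d : ℕ → ℝ) (ε : ℝ) (T : ℕ) (P : ℕ → Prop) [DecidablePred P]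
    (hε0 : 0 < ε) (hε4 : ε ≤ 1/4)
    (hg1 : 0 < g 1) (hgT : g (T+1) ≤ 1)
    (upd : ∀ t, 1 ≤ t → t ≤ T → g (t+1) = if P t then g t * (1 + ε * d t) else g t)
    (hd : ∀ t, 1 ≤ t → t ≤ T → P t → d t ^ 2 ≤ 4) :
    ∑ t ∈ Finset.Icc 1 T, (if P t then d t else 0) ≤
      Real.log (g 1)⁻¹ / ε + 6 * ε * (((Finset.Icc 1 T).filter P).card : ℝ) := by
  -- bound on |εd|
  have hyd : ∀ t, 1 ≤ t → t ≤ T → P t → -(1/2) ≤ ε * d t ∧ ε * d t ≤ 1/2 := by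
    intro t h1 h2 hP
    have h4 := hd t h1 h2 hP
    have hdle : -2 ≤ d t ∧ d t ≤ 2 := by constructor <;> nlinarith
    constructor <;> nlinarith [hdle.1, hdle.2]
  have key : ∀ n, n ≤ T → 0 < g (n+1) ∧
      Real.log (g (n+1)) = Real.log (g 1) +
        ∑ t ∈ Finset.Icc 1 n, (if P t then Real.log (1 + ε * d t) else 0) := by
    intro n
    induction n with
    | zero => intro _; simp [hg1]
    | succ n ih =>
      intro hn
      obtain ⟨hpos, hlog⟩ := ih (by omega)
      have hup := upd (n+1) (by omega) hn
      rw [Finset.sum_Icc_succ_top (by omega : 1 ≤ n+1)]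
      by_cases hP : P (n+1)
      · have hy := hyd (n+1) (by omega) hn hP
        have hfac : (0:ℝ) < 1 + ε * d (n+1) := by linarith [hy.1]
        rw [if_pos hP] at hup
        constructor
        · rw [hup]; exact mul_pos hpos hfac
        · rw [hup, Real.log_mul hpos.ne' hfac.ne', if_pos hP, hlog]; ring
      · rw [if_neg hP] at hup
        rw [hup, if_neg hP]
        exact ⟨hpos, by rw [hlog]; ring⟩
  obtain ⟨hposT, hlogT⟩ := key T le_rfl
  have hlogle : ∑ t ∈ Finset.Icc 1 T, (if P t then Real.log (1 + ε * d t) else 0)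
      ≤ Real.log (g 1)⁻¹ := by
    have := Real.log_nonpos hposT.le hgT
    rw [Real.log_inv]; linarith [hlogT]
  have hterm : ∀ t ∈ Finset.Icc 1 T,
      (if P t then ε * d t - 6 * ε^2 else 0) ≤ (if P t then Real.log (1 + ε * d t) else 0) := by
    intro t ht
    rw [Finset.mem_Icc] at ht
    by_cases hP : P t
    · rw [if_pos hP, if_pos hP]
      have hy := hyd t ht.1 ht.2 hP
      have := log_one_add_lb hy.1 hy.2
      have h4 := hd t ht.1 ht.2 hP
      nlinarith [sq_nonneg ε]
    · simp [hP]
  have hsum := Finset.sum_le_sum hterm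
  have hsplit : ∑ t ∈ Finset.Icc 1 T, (if P t then ε * d t - 6 * ε^2 else 0)
      = ε * (∑ t ∈ Finset.Icc 1 T, (if P t then d t else 0))
        - 6 * ε^2 * (((Finset.Icc 1 T).filter P).card : ℝ) := by
    rw [← Finset.sum_filter]
    rw [Finset.sum_sub_distrib, Finset.sum_const, nsmul_eq_mul, ← Finset.mul_sum,
      Finset.sum_filter]
    ring
  rw [hsplit] at hsum
  have h2 : ε * (∑ t ∈ Finset.Icc 1 T, (if P t then d t else 0)) ≤
      Real.log (g 1)⁻¹ + 6 * ε^2 * (((Finset.Icc 1 T).filter P).card : ℝ) := by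
    linarith
  rw [← le_div_iff₀' hε0] at h2
  calc ∑ t ∈ Finset.Icc 1 T, (if P t then d t else 0)
      ≤ (Real.log (g 1)⁻¹ + 6 * ε^2 * (((Finset.Icc 1 T).filter P).card : ℝ)) / ε := h2
    _ = Real.log (g 1)⁻¹ / ε + 6 * ε * (((Finset.Icc 1 T).filter P).card : ℝ) := by
        field_simp


set_option maxHeartbeats 2000000 in
/-- Regret bound for the basic collaborative algorithm (Algorithm 1):
for every expert x and every honest set H, the loss on rounds involving users in H
exceeds that of x by at most 10·√(T·(ln M + N)). -/
theorem algorithm1_regret_bound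
    {U X : Type*} [Fintype U] [Fintype X] [DecidableEq U]
    (N M T : ℕ)
    (hcardU : Fintype.card U = N) (hcardX : Fintype.card X = M)
    (hN1 : 1 ≤ N) (hM2 : 2 ≤ M)
    (hTN : 16 * N ≤ T) (hTM : 16 * Real.log M ≤ (T : ℝ))
    (u : ℕ → U) (ℓ : ℕ → X → ℝ)
    (hℓ : ∀ t x, -1 ≤ ℓ t x ∧ ℓ t x ≤ 1)
    (εA εB : ℝ)
    (hεA : εA = Real.sqrt (Real.log M / T))
    (hεB : εB = Real.sqrt ((N : ℝ) / T))
    (a : ℕ → X → ℝ) (β : ℕ → X → U → ℝ)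
    (ha1 : ∀ x, a 1 x = 1 / M)
    (hβ1 : ∀ x v, β 1 x v = 1 / 2)
    (z : ℕ → X → ℝ) (hz : ∀ t x, z t x = β t x (u t))
    (w : ℕ → X → ℝ) (hw : ∀ t x, w t x = z t x * a t x)
    (W : ℕ → ℝ) (hW : ∀ t, W t = ∑ x, w t x)
    (p : ℕ → X → ℝ) (hp : ∀ t x, p t x = w t x / W t)
    (ℓp : ℕ → ℝ) (hℓp : ∀ t, ℓp t = ∑ x, p t x * ℓ t x)
    (ℓA : ℕ → X → ℝ)
    (hℓA : ∀ t x, ℓA t x = z t x * ℓ t x + (1 - z t x) * ℓp t)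
    (ha : ∀ t x, 1 ≤ t →
      a (t + 1) x = a t x * (1 + εA * ((∑ y, a t y * ℓA t y) - ℓA t x)))
    (hβu : ∀ t x, 1 ≤ t →
      β (t + 1) x (u t) = β t x (u t) *
        (1 + εB * ((β t x (u t) * ℓ t x + (1 - β t x (u t)) * ℓp t) - ℓ t x)))
    (hβo : ∀ t x v, 1 ≤ t → v ≠ u t → β (t + 1) x v = β t x v)
    (hapos : ∀ t x, 1 ≤ t → 0 < a t x)
    (hasum : ∀ t, 1 ≤ t → ∑ x, a t x = 1)
    (hβpos : ∀ t x v, 1 ≤ t → 0 < β t x v ∧ β t x v < 1)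
    (hWpos : ∀ t, 1 ≤ t → 0 < W t)
    (x : X) (H : Finset U) :
    ∑ t ∈ (Finset.Icc 1 T).filter (fun t => u t ∈ H), ℓp t ≤
      (∑ t ∈ (Finset.Icc 1 T).filter (fun t => u t ∈ H), ℓ t x)
        + 10 * Real.sqrt ((T : ℝ) * (Real.log M + N)) := by
  have hT16 : 16 ≤ T := by omega
  have hT0 : (0:ℝ) < T := by exact_mod_cast Nat.pos_of_ne_zero (by omega)
  have hM1 : (1:ℝ) < M := by exact_mod_cast hM2.trans_lt' one_lt_two
  have hL : 0 < Real.log M := Real.log_pos hM1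
  have hN0 : (0:ℝ) < N := by exact_mod_cast hN1
  have hTNr : 16 * (N:ℝ) ≤ T := by exact_mod_cast hTN
  have hεA0 : 0 < εA := by rw [hεA]; exact Real.sqrt_pos.mpr (by positivity)
  have hεB0 : 0 < εB := by rw [hεB]; exact Real.sqrt_pos.mpr (by positivity)
  have hsq14 : Real.sqrt (1/16 : ℝ) = 1/4 := by
    rw [show (1/16:ℝ) = (1/4)^2 by norm_num, Real.sqrt_sq (by norm_num)]
  have hεA4 : εA ≤ 1/4 := by
    rw [hεA, ← hsq14]
    apply Real.sqrt_le_sqrt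
    rw [div_le_iff₀ hT0]; linarith
  have hεB4 : εB ≤ 1/4 := by
    rw [hεB, ← hsq14]
    apply Real.sqrt_le_sqrt
    rw [div_le_iff₀ hT0]; linarith
  have hz01 : ∀ t y, 1 ≤ t → 0 < z t y ∧ z t y < 1 := by
    intro t y ht; rw [hz]; exact hβpos t y (u t) ht
  have hppos : ∀ t y, 1 ≤ t → 0 ≤ p t y := by
    intro t y ht
    rw [hp, hw]
    exact div_nonneg (mul_nonneg (hz01 t y ht).1.le (hapos t y ht).le) (hWpos t ht).le
  have hpsum : ∀ t, 1 ≤ t → ∑ y, p t y = 1 := by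
    intro t ht
    calc ∑ y, p t y = (∑ y, w t y) / W t := by
          rw [Finset.sum_div]; exact Finset.sum_congr rfl fun y _ => hp t y
      _ = 1 := by rw [← hW]; exact div_self (hWpos t ht).ne'
  have hℓpbd : ∀ t, 1 ≤ t → -1 ≤ ℓp t ∧ ℓp t ≤ 1 := by
    intro t ht
    rw [hℓp]
    constructor
    · calc (-1:ℝ) = ∑ y, p t y * (-1) := by rw [← Finset.sum_mul, hpsum t ht]; ring
        _ ≤ ∑ y, p t y * ℓ t y :=
          Finset.sum_le_sum fun y _ => mul_le_mul_of_nonneg_left (hℓ t y).1 (hppos t y ht)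
    · calc ∑ y, p t y * ℓ t y ≤ ∑ y, p t y * 1 :=
          Finset.sum_le_sum fun y _ => mul_le_mul_of_nonneg_left (hℓ t y).2 (hppos t y ht)
        _ = 1 := by rw [← Finset.sum_mul, hpsum t ht]; ring
  have hℓAbd : ∀ t y, 1 ≤ t → -1 ≤ ℓA t y ∧ ℓA t y ≤ 1 := by
    intro t y ht
    have h1 := hz01 t y ht
    have h2 := hℓpbd t ht
    have h3 := hℓ t y
    rw [hℓA]
    constructor <;> nlinarith [h1.1, h1.2, h2.1, h2.2, h3.1, h3.2]
  have hmean : ∀ t, 1 ≤ t → (∑ y, a t y * ℓA t y) = ℓp t := by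
    intro t ht
    have hws : ∀ y, w t y = p t y * W t := by
      intro y; rw [hp, div_mul_cancel₀ _ (hWpos t ht).ne']
    calc ∑ y, a t y * ℓA t y
        = ∑ y, (w t y * ℓ t y + a t y * ℓp t - w t y * ℓp t) := by
          refine Finset.sum_congr rfl fun y _ => ?_
          rw [hℓA, hw]; ring
      _ = (∑ y, w t y * ℓ t y) + (∑ y, a t y) * ℓp t - (∑ y, w t y) * ℓp t := by
          rw [Finset.sum_sub_distrib, Finset.sum_add_distrib, Finset.sum_mul, Finset.sum_mul]
      _ = (W t * ℓp t) + 1 * ℓp t - W t * ℓp t := by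
          rw [hasum t ht, ← hW]
          congr 2
          calc ∑ y, w t y * ℓ t y = ∑ y, W t * (p t y * ℓ t y) := by
                refine Finset.sum_congr rfl fun y _ => ?_
                rw [hws y]; ring
            _ = W t * ℓp t := by rw [← Finset.mul_sum, hℓp]
      _ = ℓp t := by ring
  -- Bound A: expert-level MW
  have boundA : ∑ t ∈ Finset.Icc 1 T, z t x * (ℓp t - ℓ t x)
      ≤ Real.log M / εA + 6 * εA * T := by
    have hgT : a (T+1) x ≤ 1 := by
      have hs := hasum (T+1) (by omega)
      have := Finset.single_le_sum (f := a (T+1))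
        (fun y _ => (hapos (T+1) y (by omega)).le) (Finset.mem_univ x)
      linarith
    have hB := mw_bound_s6 (fun t => a t x)
      (fun t => (∑ y, a t y * ℓA t y) - ℓA t x) εA T (fun _ => True)
      hεA0 hεA4 (by beta_reduce; rw [ha1]; positivity) hgT
      (fun t h1 _ => by beta_reduce; simp only [if_true]; exact ha t x h1)
      (fun t h1 _ _ => by
        beta_reduce
        rw [hmean t h1]
        have h2 := hℓpbd t h1
        have h3 := hℓAbd t x h1
        nlinarith [h2.1, h2.2, h3.1, h3.2])
    beta_reduce at hB
    simp only [if_true, Finset.filter_true, Nat.card_Icc] at hB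
    rw [ha1, one_div, inv_inv] at hB
    have hcard : ((T + 1 - 1 : ℕ) : ℝ) = (T : ℝ) := by norm_num
    rw [hcard] at hB
    calc ∑ t ∈ Finset.Icc 1 T, z t x * (ℓp t - ℓ t x)
        = ∑ t ∈ Finset.Icc 1 T, ((∑ y, a t y * ℓA t y) - ℓA t x) := by
          refine Finset.sum_congr rfl fun t ht => ?_
          rw [Finset.mem_Icc] at ht
          rw [hmean t ht.1, hℓA]; ring
      _ ≤ Real.log M / εA + 6 * εA * T := hB
  -- Bounds B and C: per-user MW on β and 1 - β
  have boundB : ∀ v : U, ∑ t ∈ Finset.Icc 1 T,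
      (if u t = v then (1 - z t x) * (ℓp t - ℓ t x) else 0)
      ≤ Real.log 2 / εB
        + 6 * εB * (((Finset.Icc 1 T).filter (fun t => u t = v)).card : ℝ) := by
    intro v
    have hB := mw_bound_s6 (fun t => β t x v)
      (fun t => (1 - β t x v) * (ℓp t - ℓ t x)) εB T (fun t => u t = v)
      hεB0 hεB4 (by beta_reduce; rw [hβ1]; norm_num) (by beta_reduce; exact (hβpos (T+1) x v (by omega)).2.le)
      (fun t h1 _ => by
        beta_reduce
        by_cases h : u t = v
        · rw [if_pos h]
          have hb := hβu t x h1
          rw [h] at hb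
          rw [hb]; ring
        · rw [if_neg h]
          exact hβo t x v h1 fun e => h e.symm)
      (fun t h1 _ _ => by
        beta_reduce
        have h2 := hℓpbd t h1
        have h3 := hℓ t x
        have h4 := hβpos t x v h1
        have hb1 : (1 - β t x v)^2 ≤ 1 := by nlinarith [h4.1, h4.2]
        have hd2 : (ℓp t - ℓ t x)^2 ≤ 4 := by nlinarith [h2.1, h2.2, h3.1, h3.2]
        calc ((1 - β t x v) * (ℓp t - ℓ t x))^2
            = (1 - β t x v)^2 * (ℓp t - ℓ t x)^2 := by ring
          _ ≤ 1 * 4 := mul_le_mul hb1 hd2 (sq_nonneg _) one_pos.le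
          _ = 4 := by ring)
    beta_reduce at hB
    rw [hβ1, one_div, inv_inv] at hB
    calc ∑ t ∈ Finset.Icc 1 T, (if u t = v then (1 - z t x) * (ℓp t - ℓ t x) else 0)
        = ∑ t ∈ Finset.Icc 1 T, (if u t = v then (1 - β t x v) * (ℓp t - ℓ t x) else 0) := by
          refine Finset.sum_congr rfl fun t ht => ?_
          by_cases h : u t = v
          · rw [if_pos h, if_pos h, hz, h]
          · rw [if_neg h, if_neg h]
      _ ≤ _ := hB
  have boundC : ∀ v : U, ∑ t ∈ Finset.Icc 1 T,
      (if u t = v then -(z t x * (ℓp t - ℓ t x)) else 0)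
      ≤ Real.log 2 / εB
        + 6 * εB * (((Finset.Icc 1 T).filter (fun t => u t = v)).card : ℝ) := by
    intro v
    have hB := mw_bound_s6 (fun t => 1 - β t x v)
      (fun t => -(β t x v * (ℓp t - ℓ t x))) εB T (fun t => u t = v)
      hεB0 hεB4 (by beta_reduce; rw [hβ1]; norm_num) (by beta_reduce; linarith [(hβpos (T+1) x v (by omega)).1])
      (fun t h1 _ => by
        beta_reduce
        by_cases h : u t = v
        · rw [if_pos h]
          have hb := hβu t x h1
          rw [h] at hb
          rw [hb]; ring
        · rw [if_neg h, hβo t x v h1 fun e => h e.symm])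
      (fun t h1 _ _ => by
        beta_reduce
        have h2 := hℓpbd t h1
        have h3 := hℓ t x
        have h4 := hβpos t x v h1
        have hb1 : (β t x v)^2 ≤ 1 := by nlinarith [h4.1, h4.2]
        have hd2 : (ℓp t - ℓ t x)^2 ≤ 4 := by nlinarith [h2.1, h2.2, h3.1, h3.2]
        calc (-(β t x v * (ℓp t - ℓ t x)))^2
            = (β t x v)^2 * (ℓp t - ℓ t x)^2 := by ring
          _ ≤ 1 * 4 := mul_le_mul hb1 hd2 (sq_nonneg _) one_pos.le
          _ = 4 := by ring)
    beta_reduce at hB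
    have h12 : (1:ℝ) - 1/2 = 1/2 := by norm_num
    rw [hβ1, h12, one_div, inv_inv] at hB
    calc ∑ t ∈ Finset.Icc 1 T, (if u t = v then -(z t x * (ℓp t - ℓ t x)) else 0)
        = ∑ t ∈ Finset.Icc 1 T, (if u t = v then -(β t x v * (ℓp t - ℓ t x)) else 0) := by
          refine Finset.sum_congr rfl fun t ht => ?_
          by_cases h : u t = v
          · rw [if_pos h, if_pos h, hz, h]
          · rw [if_neg h, if_neg h]
      _ ≤ _ := hB
  -- fiber decomposition over users
  have hfiber : ∀ (G : Finset U) (f : ℕ → ℝ),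
      ∑ t ∈ Finset.Icc 1 T, (if u t ∈ G then f t else 0)
      = ∑ v ∈ G, ∑ t ∈ Finset.Icc 1 T, (if u t = v then f t else 0) := by
    intro G f
    calc ∑ t ∈ Finset.Icc 1 T, (if u t ∈ G then f t else 0)
        = ∑ t ∈ Finset.Icc 1 T, ∑ v ∈ G, (if u t = v then f t else 0) :=
          Finset.sum_congr rfl fun t _ => (Finset.sum_ite_eq G (u t) fun _ => f t).symm
      _ = ∑ v ∈ G, ∑ t ∈ Finset.Icc 1 T, (if u t = v then f t else 0) := Finset.sum_comm
  have hcardsum : ∑ v : U, (((Finset.Icc 1 T).filter (fun t => u t = v)).card : ℝ)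
      = (T : ℝ) := by
    have h := Finset.card_eq_sum_card_fiberwise
      (s := Finset.Icc 1 T) (t := (Finset.univ : Finset U)) (f := u)
      (fun t _ => Finset.mem_univ _)
    rw [Nat.card_Icc, Nat.add_sub_cancel] at h
    rw [← Nat.cast_sum, ← h]
  have hdecomp : ∀ t, (if u t ∈ H then (ℓp t - ℓ t x) else 0)
      = z t x * (ℓp t - ℓ t x)
        + ((if u t ∈ Hᶜ then -(z t x * (ℓp t - ℓ t x)) else 0)
        + (if u t ∈ H then (1 - z t x) * (ℓp t - ℓ t x) else 0)) := by
    intro t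
    by_cases h : u t ∈ H
    · rw [if_pos h, if_neg (by simp [h]), if_pos h]; ring
    · rw [if_neg h, if_pos (Finset.mem_compl.mpr h), if_neg h]; ring
  have hmain : ∑ t ∈ Finset.Icc 1 T, (if u t ∈ H then (ℓp t - ℓ t x) else 0)
      ≤ Real.log M / εA + 6 * εA * T + ((N:ℝ) * (Real.log 2 / εB) + 6 * εB * T) := by
    have e1 : ∑ t ∈ Finset.Icc 1 T, (if u t ∈ H then (ℓp t - ℓ t x) else 0)
        = (∑ t ∈ Finset.Icc 1 T, z t x * (ℓp t - ℓ t x))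
          + ((∑ t ∈ Finset.Icc 1 T, (if u t ∈ Hᶜ then -(z t x * (ℓp t - ℓ t x)) else 0))
          + (∑ t ∈ Finset.Icc 1 T, (if u t ∈ H then (1 - z t x) * (ℓp t - ℓ t x) else 0))) := by
      rw [Finset.sum_congr rfl (fun t _ => hdecomp t), Finset.sum_add_distrib,
        Finset.sum_add_distrib]
    rw [e1, hfiber Hᶜ _, hfiber H _]
    have b2 : ∑ v ∈ Hᶜ, ∑ t ∈ Finset.Icc 1 T, (if u t = v then -(z t x * (ℓp t - ℓ t x)) else 0)
        ≤ ∑ v ∈ Hᶜ, (Real.log 2 / εB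
            + 6 * εB * (((Finset.Icc 1 T).filter (fun t => u t = v)).card : ℝ)) :=
      Finset.sum_le_sum fun v _ => boundC v
    have b3 : ∑ v ∈ H, ∑ t ∈ Finset.Icc 1 T, (if u t = v then (1 - z t x) * (ℓp t - ℓ t x) else 0)
        ≤ ∑ v ∈ H, (Real.log 2 / εB
            + 6 * εB * (((Finset.Icc 1 T).filter (fun t => u t = v)).card : ℝ)) :=
      Finset.sum_le_sum fun v _ => boundB v
    have b4 : ∑ v ∈ Hᶜ, (Real.log 2 / εB
            + 6 * εB * (((Finset.Icc 1 T).filter (fun t => u t = v)).card : ℝ))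
        + ∑ v ∈ H, (Real.log 2 / εB
            + 6 * εB * (((Finset.Icc 1 T).filter (fun t => u t = v)).card : ℝ))
        = (N:ℝ) * (Real.log 2 / εB) + 6 * εB * T := by
      rw [Finset.sum_compl_add_sum]
      rw [Finset.sum_add_distrib, Finset.sum_const, Finset.card_univ, hcardU,
        ← Finset.mul_sum, hcardsum, nsmul_eq_mul]
    linarith [boundA, b2, b3]
  -- numeric simplification
  have sqrt_helper : ∀ c : ℝ, 0 < c →
      c / Real.sqrt (c / T) = Real.sqrt ((T:ℝ) * c)
        ∧ Real.sqrt (c / T) * T = Real.sqrt ((T:ℝ) * c) := by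
    intro c hc
    have hs0 : 0 < Real.sqrt (c / T) := Real.sqrt_pos.mpr (by positivity)
    have h1 : Real.sqrt (c/T) * Real.sqrt ((T:ℝ)*c) = c := by
      rw [← Real.sqrt_mul (by positivity)]
      rw [show c/(T:ℝ) * ((T:ℝ)*c) = c^2 by field_simp]
      exact Real.sqrt_sq hc.le
    constructor
    · rw [div_eq_iff hs0.ne', mul_comm]; exact h1.symm
    · refine mul_left_cancel₀ hs0.ne' ?_
      rw [h1]
      calc Real.sqrt (c/T) * (Real.sqrt (c/T) * T) = (Real.sqrt (c/T))^2 * T := by ring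
        _ = (c/T) * T := by rw [Real.sq_sqrt (by positivity)]
        _ = c := by field_simp
  have eA1 : Real.log M / εA = Real.sqrt ((T:ℝ) * Real.log M) := by
    rw [hεA]; exact (sqrt_helper _ hL).1
  have eA2 : εA * T = Real.sqrt ((T:ℝ) * Real.log M) := by
    rw [hεA]; exact (sqrt_helper _ hL).2
  have eB1 : (N:ℝ) / εB = Real.sqrt ((T:ℝ) * N) := by
    rw [hεB]; exact (sqrt_helper _ hN0).1
  have eB2 : εB * T = Real.sqrt ((T:ℝ) * N) := by
    rw [hεB]; exact (sqrt_helper _ hN0).2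
  have hlog2 : Real.log 2 ≤ 1 := by
    have := Real.log_two_lt_d9; linarith
  have hlog2' : 0 < Real.log 2 := Real.log_pos (by norm_num)
  have hSA0 : 0 ≤ Real.sqrt ((T:ℝ) * Real.log M) := Real.sqrt_nonneg _
  have hSB0 : 0 ≤ Real.sqrt ((T:ℝ) * N) := Real.sqrt_nonneg _
  have hR0 : 0 ≤ Real.sqrt ((T:ℝ) * (Real.log M + N)) := Real.sqrt_nonneg _
  have hSA2 : (Real.sqrt ((T:ℝ) * Real.log M))^2 = (T:ℝ) * Real.log M :=
    Real.sq_sqrt (by positivity)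
  have hSB2 : (Real.sqrt ((T:ℝ) * N))^2 = (T:ℝ) * N := Real.sq_sqrt (by positivity)
  have hR2 : (Real.sqrt ((T:ℝ) * (Real.log M + N)))^2 = (T:ℝ) * (Real.log M + N) :=
    Real.sq_sqrt (by positivity)
  have hnum : Real.log M / εA + 6 * εA * T + ((N:ℝ) * (Real.log 2 / εB) + 6 * εB * T)
      ≤ 10 * Real.sqrt ((T:ℝ) * (Real.log M + N)) := by
    have hterm : (N:ℝ) * (Real.log 2 / εB) = Real.log 2 * ((N:ℝ) / εB) := by ring
    rw [eA1, hterm, eB1, show 6 * εA * (T:ℝ) = 6 * (εA * T) by ring,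
      show 6 * εB * (T:ℝ) = 6 * (εB * T) by ring, eA2, eB2]
    have h7 : Real.sqrt ((T:ℝ) * Real.log M) + 6 * Real.sqrt ((T:ℝ) * Real.log M)
        + (Real.log 2 * Real.sqrt ((T:ℝ) * N) + 6 * Real.sqrt ((T:ℝ) * N))
        ≤ 7 * Real.sqrt ((T:ℝ) * Real.log M) + 7 * Real.sqrt ((T:ℝ) * N) := by
      nlinarith [mul_le_mul_of_nonneg_right hlog2 hSB0]
    refine h7.trans ?_
    nlinarith [sq_nonneg (Real.sqrt ((T:ℝ) * Real.log M) - Real.sqrt ((T:ℝ) * N)),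
      sq_nonneg (Real.sqrt ((T:ℝ) * Real.log M) + Real.sqrt ((T:ℝ) * N)),
      mul_nonneg hSA0 hSB0, mul_nonneg hR0 (add_nonneg hSA0 hSB0)]
  -- wrap up
  have hfilter : ∑ t ∈ (Finset.Icc 1 T).filter (fun t => u t ∈ H), (ℓp t - ℓ t x)
      = ∑ t ∈ Finset.Icc 1 T, (if u t ∈ H then (ℓp t - ℓ t x) else 0) :=
    Finset.sum_filter _ _
  have hsub : ∑ t ∈ (Finset.Icc 1 T).filter (fun t => u t ∈ H), (ℓp t - ℓ t x)
      = (∑ t ∈ (Finset.Icc 1 T).filter (fun t => u t ∈ H), ℓp t)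
        - ∑ t ∈ (Finset.Icc 1 T).filter (fun t => u t ∈ H), ℓ t x :=
    Finset.sum_sub_distrib _ _
  linarith [hmain, hnum, hfilter, hsub]
end

section
/- Variance-penalized excess loss bound for a participating expert (Lemma for the full algorithm): under the stated definitions, if the pair (x,V) satisfies the multiplicative-weights regret guarantee Σ_{t=1}^{T} ℓ_t^A(A_t) ≤ Σ_{t=1}^{T} ℓ_t^A(x,V) + ε·Σ_{t=1}^{T} (ℓ_t^A(A_t) − ℓ_t^A(x,V))² + R, then Σ_{t=1}^{T} z_t(x,V)·(ℓ_t(p_t) − ℓ_t(x)) ≤ ε·Σ_{t=1}^{T} z_t(x,V)·(ℓ_t(x) − ℓ_t(p_t))² + R. -/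
/-- Variance-penalized excess loss bound for a participating expert
(Lemma for the full algorithm). -/
theorem variance_penalized_specialist_lemma
    {X V : Type*} [Fintype X] [Fintype V] [Nonempty X] [Nonempty V]
    (T : ℕ)
    (A z : ℕ → X × V → ℝ) (ℓ : ℕ → X → ℝ)
    (hA : ∀ t ∈ Finset.Icc 1 T, (∀ q, 0 ≤ A t q) ∧ ∑ q, A t q = 1)
    (hz : ∀ t ∈ Finset.Icc 1 T, ∀ q, 0 ≤ z t q ∧ z t q ≤ 1)
    (hℓ : ∀ t ∈ Finset.Icc 1 T, ∀ x, -1 ≤ ℓ t x ∧ ℓ t x ≤ 1)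
    (w : ℕ → X × V → ℝ) (hw : ∀ t q, w t q = z t q * A t q)
    (W : ℕ → ℝ) (hW : ∀ t, W t = ∑ q, w t q)
    (hWpos : ∀ t ∈ Finset.Icc 1 T, 0 < W t)
    (p : ℕ → X → ℝ) (hp : ∀ t x, p t x = (∑ v : V, w t (x, v)) / W t)
    (ℓp : ℕ → ℝ) (hℓp : ∀ t, ℓp t = ∑ x, p t x * ℓ t x)
    (ℓA : ℕ → X × V → ℝ)
    (hℓA : ∀ t q, ℓA t q = z t q * ℓ t q.1 + (1 - z t q) * ℓp t)
    (ℓAA : ℕ → ℝ) (hℓAA : ∀ t, ℓAA t = ∑ q, A t q * ℓA t q)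
    (q : X × V) (ε R : ℝ) (hε : 0 < ε)
    (hyp : ∑ t ∈ Finset.Icc 1 T, ℓAA t ≤
      ∑ t ∈ Finset.Icc 1 T, ℓA t q
        + ε * ∑ t ∈ Finset.Icc 1 T, (ℓAA t - ℓA t q) ^ 2 + R) :
    ∑ t ∈ Finset.Icc 1 T, z t q * (ℓp t - ℓ t q.1) ≤
      ε * ∑ t ∈ Finset.Icc 1 T, z t q * (ℓ t q.1 - ℓp t) ^ 2 + R := by

  have key : ∀ t ∈ Finset.Icc 1 T, ℓAA t = ℓp t := by
    intro t ht
    have hWt := (hWpos t ht).ne'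
    have hsum : ∑ q', w t q' * ℓ t q'.1 = ℓp t * W t := by
      rw [hℓp, Finset.sum_mul, Fintype.sum_prod_type]
      refine Finset.sum_congr rfl fun x _ => ?_
      show ∑ v : V, w t (x, v) * ℓ t x = _
      rw [← Finset.sum_mul, hp]
      field_simp
    have hstep : ∀ q', A t q' * ℓA t q'
        = w t q' * ℓ t q'.1 + (A t q' - w t q') * ℓp t := by
      intro q'; rw [hℓA, hw]; ring
    rw [hℓAA, Finset.sum_congr rfl (fun q' _ => hstep q'), Finset.sum_add_distrib,
      hsum, ← Finset.sum_mul, Finset.sum_sub_distrib, (hA t ht).2, ← hW]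
    ring
  have hdiff : ∀ t ∈ Finset.Icc 1 T,
      ℓAA t - ℓA t q = z t q * (ℓp t - ℓ t q.1) := by
    intro t ht
    rw [key t ht, hℓA]; ring
  have h1 : ∑ t ∈ Finset.Icc 1 T, z t q * (ℓp t - ℓ t q.1)
      = ∑ t ∈ Finset.Icc 1 T, (ℓAA t - ℓA t q) := by
    exact (Finset.sum_congr rfl fun t ht => (hdiff t ht).symm)
  have h2 : ∑ t ∈ Finset.Icc 1 T, (ℓAA t - ℓA t q) ^ 2
      ≤ ∑ t ∈ Finset.Icc 1 T, z t q * (ℓ t q.1 - ℓp t) ^ 2 := by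
    refine Finset.sum_le_sum fun t ht => ?_
    rw [hdiff t ht]
    obtain ⟨hz0, hz1⟩ := hz t ht q
    nlinarith [mul_nonneg (mul_nonneg hz0 (sub_nonneg.2 hz1)) (sq_nonneg (ℓ t q.1 - ℓp t))]
  have h3 : ∑ t ∈ Finset.Icc 1 T, (ℓAA t - ℓA t q)
      ≤ ε * ∑ t ∈ Finset.Icc 1 T, (ℓAA t - ℓA t q) ^ 2 + R := by
    rw [Finset.sum_sub_distrib]; linarith
  rw [h1]
  nlinarith [h3, mul_le_mul_of_nonneg_left h2 hε.le]
end

section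
/- Main regret theorem (conditional form combining the two key lemmas of the full algorithm): under the stated hypotheses, Σ_{t≤T : u_t∈H} (−d_t) ≤ (C₁ + C₂ + 2)·( √(V_H·(ln M + ln ln T)) + (1 + ln M + ln ln T) + √(N·(V_H·α·ln(1/α) + V_D·(1−α)·ln(1/(1−α)))) + √(T·ln ln T) ). Equivalently, with d_t = ℓ_t(x) − ℓ_t(p_t), the total loss of the algorithm on rounds of H exceeds that of expert x by at most this amount. -/
lemma aux_sqrt_add_le (x y : ℝ) (hx : 0 ≤ x) (hy : 0 ≤ y) :
    Real.sqrt (x + y) ≤ Real.sqrt x + Real.sqrt y := by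
  have hx' := Real.sq_sqrt hx
  have hy' := Real.sq_sqrt hy
  have h : x + y ≤ (Real.sqrt x + Real.sqrt y) ^ 2 := by
    nlinarith [Real.sqrt_nonneg x, Real.sqrt_nonneg y,
      mul_nonneg (Real.sqrt_nonneg x) (Real.sqrt_nonneg y)]
  calc Real.sqrt (x + y) ≤ Real.sqrt ((Real.sqrt x + Real.sqrt y) ^ 2) :=
        Real.sqrt_le_sqrt h
    _ = Real.sqrt x + Real.sqrt y := Real.sqrt_sq (by positivity)

set_option maxHeartbeats 1000000 in
/-- Main regret theorem (conditional form combining the two key lemmas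
of the full algorithm). -/
theorem main_regret_theorem
    {U : Type*} [Fintype U] [DecidableEq U]
    (T N M : ℕ) (hT : 3 ≤ T) (hcardU : Fintype.card U = N) (hN1 : 1 ≤ N) (hM2 : 2 ≤ M)
    (u : ℕ → U) (H : Finset U)
    (d : ℕ → ℝ) (hd : ∀ t ∈ Finset.Icc 1 T, -2 ≤ d t ∧ d t ≤ 2)
    (VH VD α : ℝ)
    (hVH : VH = ∑ t ∈ (Finset.Icc 1 T).filter (fun t => u t ∈ H), (d t) ^ 2)
    (hVD : VD = ∑ t ∈ (Finset.Icc 1 T).filter (fun t => u t ∉ H), (d t) ^ 2)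
    (hα : α = (H.card : ℝ) / N)
    (C₁ C₂ : ℝ) (hC₁ : 1 ≤ C₁) (hC₂ : 1 ≤ C₂)
    (hyp : ∀ V εV : ℝ, (∃ k : ℕ, k ≤ Nat.log 2 T ∧ V = (2 : ℝ) ^ k) →
      εV = min 1 (Real.sqrt ((Real.log M + Real.log (Real.log T)) / V)) →
      ∃ zV : ℕ → ℝ, (∀ t ∈ Finset.Icc 1 T, 0 ≤ zV t ∧ zV t ≤ 1) ∧
        (∑ t ∈ Finset.Icc 1 T, zV t * (d t + εV * (d t) ^ 2) ≤
          (∑ t ∈ (Finset.Icc 1 T).filter (fun t => u t ∈ H), d t)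
            + εV * VH
            + C₁ * (Real.sqrt ((N : ℝ) * (VH * α * Real.log (1 / α)
                + VD * (1 - α) * Real.log (1 / (1 - α))))
              + Real.sqrt ((T : ℝ) * Real.log (Real.log T)))) ∧
        (∑ t ∈ Finset.Icc 1 T, zV t * (-(d t)) ≤
          εV * ∑ t ∈ Finset.Icc 1 T, zV t * (d t) ^ 2
            + C₂ * (Real.log M + Real.log (Real.log T)) / εV)) :
    ∑ t ∈ (Finset.Icc 1 T).filter (fun t => u t ∈ H), (-(d t)) ≤
      (C₁ + C₂ + 2) *
        (Real.sqrt (VH * (Real.log M + Real.log (Real.log T)))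
          + (1 + Real.log M + Real.log (Real.log T))
          + Real.sqrt ((N : ℝ) * (VH * α * Real.log (1 / α)
              + VD * (1 - α) * Real.log (1 / (1 - α))))
          + Real.sqrt ((T : ℝ) * Real.log (Real.log T))) := by
  set L : ℝ := Real.log M + Real.log (Real.log T) with hLdef
  clear_value L
  have hT3 : (3 : ℝ) ≤ (T : ℝ) := by exact_mod_cast hT
  have hlogT : 1 < Real.log T := by
    have hexp : Real.exp 1 < 3 := by
      have := Real.exp_one_lt_d9; linarith
    have h1 : (1 : ℝ) < Real.log 3 := by
      rw [Real.lt_log_iff_exp_lt (by norm_num)]; exact hexp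
    have h2 : Real.log 3 ≤ Real.log T := Real.log_le_log (by norm_num) hT3
    linarith
  have hL : 0 < L := by
    have h1 : 0 < Real.log M :=
      Real.log_pos (by exact_mod_cast lt_of_lt_of_le one_lt_two hM2)
    have h2 : 0 < Real.log (Real.log T) := Real.log_pos hlogT
    rw [hLdef]; linarith
  have hVH0 : 0 ≤ VH := by rw [hVH]; positivity
  -- VH ≤ 4T
  have hVH4 : VH ≤ 4 * T := by
    rw [hVH]
    have hcard : ((Finset.Icc 1 T).filter (fun t => u t ∈ H)).card ≤ T := by
      have h1 := Finset.card_filter_le (Finset.Icc 1 T) (fun t => u t ∈ H)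
      have h2 : (Finset.Icc 1 T).card = T := by rw [Nat.card_Icc]; omega
      omega
    calc ∑ t ∈ (Finset.Icc 1 T).filter (fun t => u t ∈ H), (d t) ^ 2
        ≤ ∑ _t ∈ (Finset.Icc 1 T).filter (fun t => u t ∈ H), (4 : ℝ) := by
          apply Finset.sum_le_sum
          intro t ht
          obtain ⟨ha, hb⟩ := hd t (Finset.mem_of_mem_filter t ht)
          nlinarith
      _ = (((Finset.Icc 1 T).filter (fun t => u t ∈ H)).card : ℝ) * 4 := by
          rw [Finset.sum_const, nsmul_eq_mul]
      _ ≤ (T : ℝ) * 4 := by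
          have : (((Finset.Icc 1 T).filter (fun t => u t ∈ H)).card : ℝ) ≤ (T : ℝ) := by
            exact_mod_cast hcard
          linarith
      _ = 4 * T := by ring
  set W : ℝ := max 1 VH with hWdef
  clear_value W
  have hW1 : (1 : ℝ) ≤ W := by rw [hWdef]; exact le_max_left _ _
  have hW0 : (0 : ℝ) < W := lt_of_lt_of_le one_pos hW1
  have hVHW : VH ≤ W := by rw [hWdef]; exact le_max_right _ _
  have hW1VH : W ≤ 1 + VH := by rw [hWdef]; exact max_le (by linarith) (by linarith)
  set k : ℕ := min (Nat.log 2 T) ⌊Real.logb 2 W⌋₊ with hkdef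
  clear_value k
  set V : ℝ := (2 : ℝ) ^ k with hVdef
  clear_value V
  have hV0 : (0 : ℝ) < V := by rw [hVdef]; positivity
  -- V ≤ W
  have hVW : V ≤ W := by
    have hkfl : k ≤ ⌊Real.logb 2 W⌋₊ := by rw [hkdef]; exact min_le_right _ _
    have hk1 : (k : ℝ) ≤ Real.logb 2 W := by
      have h2 : (⌊Real.logb 2 W⌋₊ : ℝ) ≤ Real.logb 2 W :=
        Nat.floor_le (Real.logb_nonneg (by norm_num) hW1)
      have h1 : (k : ℝ) ≤ (⌊Real.logb 2 W⌋₊ : ℝ) := by exact_mod_cast hkfl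
      linarith
    rw [hVdef]
    calc (2 : ℝ) ^ k = (2 : ℝ) ^ (k : ℝ) := (Real.rpow_natCast 2 k).symm
      _ ≤ (2 : ℝ) ^ (Real.logb 2 W) :=
          Real.rpow_le_rpow_of_exponent_le (by norm_num) hk1
      _ = W := Real.rpow_logb (by norm_num) (by norm_num) hW0
  -- W ≤ 8V
  have hW8V : W ≤ 8 * V := by
    rcases le_or_gt ⌊Real.logb 2 W⌋₊ (Nat.log 2 T) with hc | hc
    · have hkeq : k = ⌊Real.logb 2 W⌋₊ := by rw [hkdef]; exact min_eq_right hc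
      have h1 : Real.logb 2 W < (k : ℝ) + 1 := by
        rw [hkeq]; exact_mod_cast Nat.lt_floor_add_one (Real.logb 2 W)
      have h2 : W < (2 : ℝ) ^ ((k : ℝ) + 1) := by
        calc W = (2 : ℝ) ^ (Real.logb 2 W) :=
              (Real.rpow_logb (by norm_num) (by norm_num) hW0).symm
          _ < (2 : ℝ) ^ ((k : ℝ) + 1) :=
              Real.rpow_lt_rpow_of_exponent_lt (by norm_num) h1
      have h3 : (2 : ℝ) ^ ((k : ℝ) + 1) = 2 * V := by
        rw [show ((k : ℝ) + 1) = ((k + 1 : ℕ) : ℝ) by push_cast; ring,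
          Real.rpow_natCast, hVdef, pow_succ]
        ring
      rw [h3] at h2
      linarith
    · have hkeq : k = Nat.log 2 T := by rw [hkdef]; exact min_eq_left (le_of_lt hc)
      have h1 : (T : ℝ) < 2 * V := by
        have h0 := Nat.lt_pow_succ_log_self (by norm_num : 1 < 2) T
        have h2 : (T : ℝ) < ((2 ^ (Nat.log 2 T + 1) : ℕ) : ℝ) := by exact_mod_cast h0
        rw [hVdef, hkeq]
        push_cast at h2 ⊢
        rw [pow_succ] at h2
        linarith
      have h4T : W ≤ 4 * T := by
        rw [hWdef]; exact max_le (by linarith) hVH4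
      linarith
  -- instantiate hypothesis
  set ε : ℝ := min 1 (Real.sqrt (L / V)) with hεdef
  clear_value ε
  have hε0 : 0 < ε := by
    rw [hεdef]; exact lt_min one_pos (Real.sqrt_pos.mpr (div_pos hL hV0))
  have hεnn : 0 ≤ ε := hε0.le
  have hkT : k ≤ Nat.log 2 T := by rw [hkdef]; exact min_le_left _ _
  obtain ⟨z, hz01, h1, h2⟩ := hyp V ε ⟨k, hkT, hVdef⟩ hεdef
  have hzd : ∑ t ∈ Finset.Icc 1 T, z t * (d t + ε * (d t) ^ 2)
      = (∑ t ∈ Finset.Icc 1 T, z t * d t) + ε * ∑ t ∈ Finset.Icc 1 T, z t * (d t) ^ 2 := by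
    rw [Finset.mul_sum, ← Finset.sum_add_distrib]
    exact Finset.sum_congr rfl (fun t _ => by ring)
  have hzneg : ∑ t ∈ Finset.Icc 1 T, z t * (-(d t))
      = -∑ t ∈ Finset.Icc 1 T, z t * d t := by
    rw [← Finset.sum_neg_distrib]
    exact Finset.sum_congr rfl (fun t _ => by ring)
  rw [hzd] at h1
  rw [hzneg] at h2
  set R₁ : ℝ := Real.sqrt ((N : ℝ) * (VH * α * Real.log (1 / α)
      + VD * (1 - α) * Real.log (1 / (1 - α)))) with hR1def
  clear_value R₁
  set R₂ : ℝ := Real.sqrt ((T : ℝ) * Real.log (Real.log T)) with hR2def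
  clear_value R₂
  have hR₁ : 0 ≤ R₁ := by rw [hR1def]; exact Real.sqrt_nonneg _
  have hR₂ : 0 ≤ R₂ := by rw [hR2def]; exact Real.sqrt_nonneg _
  have key : -(∑ t ∈ (Finset.Icc 1 T).filter (fun t => u t ∈ H), d t)
      ≤ ε * VH + C₁ * (R₁ + R₂) + C₂ * L / ε := by linarith
  clear h1 h2 hz01 z hzd hzneg hd hVH hVD hα hcardU hR1def hR2def
  set A : ℝ := Real.sqrt (VH * L) with hAdef
  clear_value A
  have hA0 : 0 ≤ A := by rw [hAdef]; exact Real.sqrt_nonneg _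
  have hA2 : A ^ 2 = VH * L := by rw [hAdef]; exact Real.sq_sqrt (by positivity)
  -- ε * VH ≤ 3 * A
  have hεVH : ε * VH ≤ 3 * A := by
    have hεle : ε ≤ Real.sqrt (L / V) := by rw [hεdef]; exact min_le_right _ _
    have hsq : ε ^ 2 ≤ L / V := by
      have h2' : ε ^ 2 ≤ (Real.sqrt (L / V)) ^ 2 := by
        exact pow_le_pow_left₀ hεnn hεle 2
      rwa [Real.sq_sqrt (by positivity)] at h2'
    have hε2V : ε ^ 2 * V ≤ L := by
      calc ε ^ 2 * V ≤ (L / V) * V := mul_le_mul_of_nonneg_right hsq hV0.le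
        _ = L := div_mul_cancel₀ _ hV0.ne'
    have hVH8V : VH ≤ 8 * V := le_trans hVHW hW8V
    have step1 : ε ^ 2 * VH ≤ 8 * L := by
      calc ε ^ 2 * VH ≤ ε ^ 2 * (8 * V) :=
            mul_le_mul_of_nonneg_left hVH8V (sq_nonneg ε)
        _ = 8 * (ε ^ 2 * V) := by ring
        _ ≤ 8 * L := by linarith
    have hsq2 : (ε * VH) ^ 2 ≤ (3 * A) ^ 2 := by
      have e1 : (ε * VH) ^ 2 = (ε ^ 2 * VH) * VH := by ring
      have e2 : (3 * A) ^ 2 = 9 * (VH * L) := by rw [mul_pow, hA2]; ring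
      rw [e1, e2]
      have c1 : (ε ^ 2 * VH) * VH ≤ (8 * L) * VH :=
        mul_le_mul_of_nonneg_right step1 hVH0
      linarith [c1, mul_nonneg hL.le hVH0, mul_nonneg hVH0 hL.le]
    exact le_of_pow_le_pow_left₀ (by norm_num : 2 ≠ 0) (by linarith : (0:ℝ) ≤ 3 * A) hsq2
  -- L / ε ≤ A + 1 + L
  have hLε : L / ε ≤ A + 1 + L := by
    have hsqrtL : Real.sqrt L ≤ 1 + L := by
      nlinarith [Real.sq_sqrt hL.le, Real.sqrt_nonneg L, sq_nonneg (Real.sqrt L - 1)]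
    rcases le_total 1 (Real.sqrt (L / V)) with hc | hc
    · have hε1 : ε = 1 := hεdef.trans (min_eq_left hc)
      rw [hε1, div_one]
      linarith
    · have hεeq : ε = Real.sqrt (L / V) := hεdef.trans (min_eq_right hc)
      have hkey : ε * Real.sqrt (L * V) = L := by
        rw [hεeq, ← Real.sqrt_mul (by positivity)]
        rw [show (L / V) * (L * V) = L ^ 2 by field_simp]
        exact Real.sqrt_sq hL.le
      have hdiv : L / ε = Real.sqrt (L * V) := by
        rw [div_eq_iff hε0.ne']
        linarith [hkey]
      rw [hdiv]
      have hs1 : Real.sqrt (L * V) ≤ Real.sqrt (L + L * VH) := by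
        apply Real.sqrt_le_sqrt
        nlinarith [hVW, hW1VH, hL.le]
      have hs2 : Real.sqrt (L + L * VH) ≤ Real.sqrt L + Real.sqrt (L * VH) :=
        aux_sqrt_add_le L (L * VH) hL.le (by positivity)
      have hs3 : Real.sqrt (L * VH) = A := by rw [hAdef, mul_comm]
      linarith
  have hC2 : C₂ * L / ε ≤ C₂ * (A + 1 + L) := by
    rw [mul_div_assoc]
    exact mul_le_mul_of_nonneg_left hLε (by linarith : (0:ℝ) ≤ C₂)
  have hgoalneg : ∑ t ∈ (Finset.Icc 1 T).filter (fun t => u t ∈ H), (-(d t))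
      = -∑ t ∈ (Finset.Icc 1 T).filter (fun t => u t ∈ H), d t :=
    Finset.sum_neg_distrib _
  rw [hgoalneg]
  have hgoalB : (1 : ℝ) + Real.log M + Real.log (Real.log T) = 1 + L := by
    rw [hLdef]; ring
  calc -∑ t ∈ (Finset.Icc 1 T).filter (fun t => u t ∈ H), d t
      ≤ ε * VH + C₁ * (R₁ + R₂) + C₂ * L / ε := key
    _ ≤ 3 * A + C₁ * (R₁ + R₂) + C₂ * (A + 1 + L) := by linarith
    _ ≤ (C₁ + C₂ + 2) * (A + (1 + Real.log M + Real.log (Real.log T)) + R₁ + R₂) := by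
        rw [hgoalB]
        nlinarith [mul_nonneg (by linarith : (0:ℝ) ≤ C₁ - 1) hA0,
          mul_nonneg (by linarith : (0:ℝ) ≤ C₁ + 2) (by linarith : (0:ℝ) ≤ 1 + L),
          mul_nonneg (by linarith : (0:ℝ) ≤ C₂ + 2) (by linarith : (0:ℝ) ≤ R₁ + R₂)]
end

section
/- Guarantee for MWM_θ (conditional form of Theorem on learning the base rate): if additionally there are reals p_t ∈ [0,1] with Σ_{t=1}^{T} p_t·ℓ_t ≤ Σ_{t=1}^{T} z_t^{u_t}·ℓ_t + C·√(T·(ln ln N + ln ln T)), then Σ_{t=1}^{T} p_t·ℓ_t ≤ Σ_{t≤T : u_t∈H} ℓ_t + (2C+1)·( √(V_H·N_H·ln(N/N_H)) + √(V_D·N_D·ln(N/N_D)) + √(T·(ln ln N + ln ln T)) ). -/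
lemma sqrt_aux (v x : ℝ) (hv : 0 < v) (hx : 0 < x) :
    v * Real.sqrt (x / v) = Real.sqrt (v * x) ∧
    x / Real.sqrt (x / v) = Real.sqrt (v * x) := by
  have h1 : (v * Real.sqrt (x / v)) ^ 2 = v * x := by
    rw [mul_pow, Real.sq_sqrt (by positivity)]
    field_simp
  have hpos : 0 < Real.sqrt (x / v) := Real.sqrt_pos.2 (by positivity)
  have h2 : (x / Real.sqrt (x / v)) ^ 2 = v * x := by
    rw [div_pow, Real.sq_sqrt (by positivity)]
    field_simp
  constructor
  · rw [← h1, Real.sqrt_sq (by positivity)]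
  · rw [← h2, Real.sqrt_sq (by positivity)]

lemma group_sum {U : Type*} [Fintype U] [DecidableEq U]
    (T : ℕ) (u : ℕ → U) (f : ℕ → ℝ) (G : Finset U) :
    ∑ v ∈ G, ∑ t ∈ (Finset.Icc 1 T).filter (fun t => u t = v), f t =
      ∑ t ∈ (Finset.Icc 1 T).filter (fun t => u t ∈ G), f t := by
  rw [← Finset.sum_fiberwise_of_maps_to
      (g := u) (s := (Finset.Icc 1 T).filter (fun t => u t ∈ G)) (t := G)
      (fun t ht => (Finset.mem_filter.1 ht).2) f]
  refine Finset.sum_congr rfl fun v hv => Finset.sum_congr ?_ fun _ _ => rfl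
  rw [Finset.filter_filter]
  exact Finset.filter_congr fun t _ => by
    constructor
    · exact fun h => ⟨h ▸ hv, h⟩
    · exact fun h => h.2

/-- Guarantee for MWM_θ (conditional form of the theorem on learning
the base rate). -/
theorem mwm_theta_guarantee
    {U : Type*} [Fintype U] [DecidableEq U]
    (N : ℕ) (hcardU : Fintype.card U = N)
    (H : Finset U) (hH1 : H.Nonempty) (hH2 : H ≠ Finset.univ)
    (T : ℕ) (u : ℕ → U) (ℓ : ℕ → ℝ)
    (hℓ : ∀ t ∈ Finset.Icc 1 T, -1 ≤ ℓ t ∧ ℓ t ≤ 1)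
    (C NH ND VH VD : ℝ) (hC : 1 ≤ C)
    (hNH : (H.card : ℝ) ≤ NH ∧ NH < N)
    (hND : ((Hᶜ.card : ℕ) : ℝ) ≤ ND ∧ ND < N)
    (hVH : 0 < VH) (hVD : 0 < VD)
    (Vu : U → ℝ) (hVu : ∀ v, 0 ≤ Vu v)
    (hVuH : ∑ v ∈ H, Vu v ≤ VH) (hVuD : ∑ v ∈ Hᶜ, Vu v ≤ VD)
    (εH εD : ℝ)
    (hεH : εH = Real.sqrt (NH * Real.log ((N : ℝ) / NH) / VH))
    (hεD : εD = Real.sqrt (ND * Real.log ((N : ℝ) / ND) / VD))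
    (z : U → ℕ → ℝ)
    (hz : ∀ v, ∀ t ∈ Finset.Icc 1 T, 0 ≤ z v t ∧ z v t ≤ 1)
    (hzH : ∀ v ∈ H,
      ∑ t ∈ (Finset.Icc 1 T).filter (fun t => u t = v), z v t * ℓ t ≤
        (∑ t ∈ (Finset.Icc 1 T).filter (fun t => u t = v), ℓ t)
          + Vu v * εH + C * Real.log ((N : ℝ) / NH) / εH)
    (hzD : ∀ v ∈ Hᶜ,
      ∑ t ∈ (Finset.Icc 1 T).filter (fun t => u t = v), z v t * ℓ t ≤
        Vu v * εD + C * Real.log ((N : ℝ) / ND) / εD)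
    (hN3 : 3 ≤ N) (hT3 : 3 ≤ T)
    (p : ℕ → ℝ) (hp : ∀ t ∈ Finset.Icc 1 T, 0 ≤ p t ∧ p t ≤ 1)
    (hpz : ∑ t ∈ Finset.Icc 1 T, p t * ℓ t ≤
      ∑ t ∈ Finset.Icc 1 T, z (u t) t * ℓ t
        + C * Real.sqrt ((T : ℝ) * (Real.log (Real.log N) + Real.log (Real.log T)))) :
    ∑ t ∈ Finset.Icc 1 T, p t * ℓ t ≤
      (∑ t ∈ (Finset.Icc 1 T).filter (fun t => u t ∈ H), ℓ t)
        + (2 * C + 1) * (Real.sqrt (VH * NH * Real.log ((N : ℝ) / NH))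
          + Real.sqrt (VD * ND * Real.log ((N : ℝ) / ND))
          + Real.sqrt ((T : ℝ) * (Real.log (Real.log N) + Real.log (Real.log T)))) := by
  set s := Finset.Icc 1 T with hs
  set lnH := Real.log ((N : ℝ) / NH) with hlnHdef
  set lnD := Real.log ((N : ℝ) / ND) with hlnDdef
  set A := Real.sqrt (VH * NH * lnH) with hA
  set B := Real.sqrt (VD * ND * lnD) with hB
  set S := Real.sqrt ((T : ℝ) * (Real.log (Real.log N) + Real.log (Real.log T))) with hS
  -- positivity facts
  have hHcard : (1 : ℝ) ≤ (H.card : ℝ) := by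
    exact_mod_cast Finset.card_pos.2 hH1
  have hDcard : (1 : ℝ) ≤ ((Hᶜ.card : ℕ) : ℝ) := by
    exact_mod_cast Finset.card_pos.2 ((Finset.nonempty_iff_ne_empty.2 (by simpa using hH2)))
  have hNHpos : 0 < NH := lt_of_lt_of_le one_pos (le_trans hHcard hNH.1)
  have hNDpos : 0 < ND := lt_of_lt_of_le one_pos (le_trans hDcard hND.1)
  have hlnH : 0 < lnH := Real.log_pos ((one_lt_div hNHpos).2 hNH.2)
  have hlnD : 0 < lnD := Real.log_pos ((one_lt_div hNDpos).2 hND.2)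
  have hauxH := sqrt_aux VH (NH * lnH) hVH (by positivity)
  have hauxD := sqrt_aux VD (ND * lnD) hVD (by positivity)
  have hεHpos : 0 < εH := by rw [hεH]; positivity
  have hεDpos : 0 < εD := by rw [hεD]; positivity
  have eA1 : VH * εH = A := by
    rw [hεH, hA, mul_assoc]; exact hauxH.1
  have eA2 : NH * lnH / εH = A := by
    rw [hεH, hA, mul_assoc]; exact hauxH.2
  have eB1 : VD * εD = B := by
    rw [hεD, hB, mul_assoc]; exact hauxD.1
  have eB2 : ND * lnD / εD = B := by
    rw [hεD, hB, mul_assoc]; exact hauxD.2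
  -- fiberwise decomposition of the z-sum
  have hfib : ∑ t ∈ s, z (u t) t * ℓ t =
      (∑ v ∈ H, ∑ t ∈ s.filter (fun t => u t = v), z v t * ℓ t)
      + ∑ v ∈ Hᶜ, ∑ t ∈ s.filter (fun t => u t = v), z v t * ℓ t := by
    rw [← Finset.sum_fiberwise_of_maps_to (g := u) (t := Finset.univ)
        (fun t _ => Finset.mem_univ (u t)) (fun t => z (u t) t * ℓ t)]
    rw [← Finset.sum_add_sum_compl H]
    congr 1 <;>
      exact Finset.sum_congr rfl fun v hv => Finset.sum_congr rfl fun t ht => by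
        rw [(Finset.mem_filter.1 ht).2]
  -- bound the H part
  have hHbound : ∑ v ∈ H, ∑ t ∈ s.filter (fun t => u t = v), z v t * ℓ t ≤
      (∑ t ∈ s.filter (fun t => u t ∈ H), ℓ t) + A + C * A := by
    calc ∑ v ∈ H, ∑ t ∈ s.filter (fun t => u t = v), z v t * ℓ t
        ≤ ∑ v ∈ H, ((∑ t ∈ s.filter (fun t => u t = v), ℓ t)
            + Vu v * εH + C * lnH / εH) := Finset.sum_le_sum hzH
      _ = (∑ v ∈ H, ∑ t ∈ s.filter (fun t => u t = v), ℓ t)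
            + (∑ v ∈ H, Vu v) * εH + (H.card : ℝ) * (C * lnH / εH) := by
          rw [Finset.sum_add_distrib, Finset.sum_add_distrib, ← Finset.sum_mul,
            Finset.sum_const, nsmul_eq_mul]
      _ ≤ (∑ t ∈ s.filter (fun t => u t ∈ H), ℓ t) + VH * εH + NH * (C * lnH / εH) := by
          rw [group_sum]
          have h1 : (∑ v ∈ H, Vu v) * εH ≤ VH * εH :=
            mul_le_mul_of_nonneg_right hVuH hεHpos.le
          have h2 : (H.card : ℝ) * (C * lnH / εH) ≤ NH * (C * lnH / εH) :=
            mul_le_mul_of_nonneg_right hNH.1 (by positivity)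
          linarith
      _ = (∑ t ∈ s.filter (fun t => u t ∈ H), ℓ t) + A + C * A := by
          rw [eA1]
          congr 1
          rw [← eA2]; field_simp
  -- bound the D part
  have hDbound : ∑ v ∈ Hᶜ, ∑ t ∈ s.filter (fun t => u t = v), z v t * ℓ t ≤
      B + C * B := by
    calc ∑ v ∈ Hᶜ, ∑ t ∈ s.filter (fun t => u t = v), z v t * ℓ t
        ≤ ∑ v ∈ Hᶜ, (Vu v * εD + C * lnD / εD) := Finset.sum_le_sum hzD
      _ = (∑ v ∈ Hᶜ, Vu v) * εD + ((Hᶜ.card : ℕ) : ℝ) * (C * lnD / εD) := by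
          rw [Finset.sum_add_distrib, ← Finset.sum_mul, Finset.sum_const, nsmul_eq_mul]
      _ ≤ VD * εD + ND * (C * lnD / εD) := by
          have h1 : (∑ v ∈ Hᶜ, Vu v) * εD ≤ VD * εD :=
            mul_le_mul_of_nonneg_right hVuD hεDpos.le
          have h2 : ((Hᶜ.card : ℕ) : ℝ) * (C * lnD / εD) ≤ ND * (C * lnD / εD) :=
            mul_le_mul_of_nonneg_right hND.1 (by positivity)
          linarith
      _ = B + C * B := by
          rw [eB1]
          congr 1
          rw [← eB2]; field_simp
  have hAnn : 0 ≤ A := Real.sqrt_nonneg _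
  have hBnn : 0 ≤ B := Real.sqrt_nonneg _
  have hSnn : 0 ≤ S := Real.sqrt_nonneg _
  have := hpz
  rw [hfib] at this
  nlinarith [this, hHbound, hDbound]
end
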